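/- arXiv:1107.4842 — 3 statements merged into one kernel-verified Lean document; each statement's English description precedes it below -/
import Mathlib

section
/- Let N ∈ [1,∞) and let (X,d,m) be a geodesic metric measure space in which the Rényi entropy functional E_N is strongly displacement convex. Let x ∈ X, r > 0, write B = B(x,r), assume 0 < m(B) < ∞, and let B⁺ ⊂ B be a Borel set with m(B⁺) = m(B)/2. Let π ∈ GeoOpt(m(B⁺)^{-1} m|_{B⁺}, δ_x) be a geodesic from the normalized restriction of m to B⁺ to the Dirac mass at x. Then for every t ∈ [0,1/2] the density ρ_t of the absolutely continuous part of (e_t)_#π with respect to m satisfies ρ_t(y) ≤ 2^{N+1}/m(B) for m-almost every y ∈ X. -/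
open MeasureTheory Metric Set Filter ProbabilityTheory
open scoped ENNReal NNReal Topology ProbabilityTheory

noncomputable section

variable {X : Type*} [MetricSpace X] [MeasurableSpace X]

/-- A constant-speed geodesic parametrized on `[0,1]`:
`d(γ(s),γ(t)) = |s - t| · d(γ(0),γ(1))` for all `s,t ∈ [0,1]`. -/
def IsGeodesicMap (γ : ℝ → X) : Prop :=
  ∀ s ∈ Set.Icc (0:ℝ) 1, ∀ t ∈ Set.Icc (0:ℝ) 1,
    dist (γ s) (γ t) = |s - t| * dist (γ 0) (γ 1)

/-- A geodesic metric space: any two points are joined by a geodesic. -/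
def IsGeodesicSpace (X : Type*) [MetricSpace X] : Prop :=
  ∀ x y : X, ∃ γ : ℝ → X, IsGeodesicMap γ ∧ γ 0 = x ∧ γ 1 = y

/-- The squared Wasserstein cost: infimum over couplings of `∫ d(x,y)² dσ`. -/
def W2sq (μ ν : Measure X) : ℝ≥0∞ :=
  ⨅ (σ : Measure (X × X)) (_ : σ.map Prod.fst = μ ∧ σ.map Prod.snd = ν),
    ∫⁻ p, edist p.1 p.2 ^ 2 ∂σ

/-- The Wasserstein distance `W₂`, with values in `[0,∞]`. -/
def W2 (μ ν : Measure X) : ℝ≥0∞ := W2sq μ ν ^ (1/2 : ℝ)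

/-- A geodesic in the Wasserstein space `(P(X), W₂)`, parametrized on `[0,1]`. -/
def IsW2Geodesic (Γ : ℝ → Measure X) : Prop :=
  (∀ t ∈ Set.Icc (0:ℝ) 1, IsProbabilityMeasure (Γ t)) ∧
  W2 (Γ 0) (Γ 1) ≠ ∞ ∧
  ∀ s ∈ Set.Icc (0:ℝ) 1, ∀ t ∈ Set.Icc (0:ℝ) 1,
    W2 (Γ s) (Γ t) = ENNReal.ofReal |s - t| * W2 (Γ 0) (Γ 1)

/-- The evaluation map `e_t : γ ↦ γ(t)`. -/
def evalGeo (t : ℝ) : (ℝ → X) → X := fun γ => γ t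

/-- `π ∈ GeoOpt(μ,ν)`: a probability measure on geodesics of `X` such that
`t ↦ (e_t)_# π` is a geodesic in `(P(X), W₂)` from `μ` to `ν`. -/
def IsGeoOpt (μ ν : Measure X) (π : Measure (ℝ → X)) : Prop :=
  IsProbabilityMeasure π ∧ (∀ᵐ γ ∂π, IsGeodesicMap γ) ∧
  π.map (evalGeo 0) = μ ∧ π.map (evalGeo 1) = ν ∧
  IsW2Geodesic (fun t => π.map (evalGeo t))

/-- `ρ ↦ ρ^(1-1/N)` with the convention `0^(1-1/N) = 0` (also for `N = 1`). -/
def renyiIntegrand (N : ℝ) (ρ : ℝ≥0∞) : ℝ≥0∞ :=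
  haveI := Classical.dec (ρ = 0)
  if ρ = 0 then 0 else ρ ^ (1 - 1/N)

/-- The Rényi entropy functional `E_N(μ) = -∫ ρ^(1-1/N) dm`, where `ρ` is the density of
the absolutely continuous part of `μ` with respect to `m`. -/
def renyiEntropy (N : ℝ) (m μ : Measure X) : EReal :=
  - ((∫⁻ x, renyiIntegrand N (μ.rnDeriv m x) ∂m : ℝ≥0∞) : EReal)

/-- The Shannon entropy functional `E_∞(μ) = ∫ ρ log ρ dm` if `μ = ρ m ≪ m`
(defined as the difference of the integrals of the positive and negative parts),
and `+∞` otherwise. -/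
def shannonEntropy (m μ : Measure X) : EReal :=
  haveI := Classical.dec (μ ≪ m)
  if μ ≪ m then
    ((∫⁻ x, ENNReal.ofReal ((μ.rnDeriv m x).toReal * Real.log (μ.rnDeriv m x).toReal) ∂m :
        ℝ≥0∞) : EReal)
      - ((∫⁻ x, ENNReal.ofReal (-((μ.rnDeriv m x).toReal *
          Real.log (μ.rnDeriv m x).toReal)) ∂m : ℝ≥0∞) : EReal)
  else (⊤ : EReal)

/-- A functional on `P(X)` is strongly displacement convex if it is convex along every
geodesic of the Wasserstein space. -/
def StronglyDisplacementConvex (E : Measure X → EReal) : Prop :=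
  ∀ Γ : ℝ → Measure X, IsW2Geodesic Γ → ∀ s ∈ Set.Icc (0:ℝ) 1,
    E (Γ s) ≤ ((1 - s : ℝ) : EReal) * E (Γ 0) + ((s : ℝ) : EReal) * E (Γ 1)

/-- The displacement convexity class `DC_∞`. -/
def MemDCinf (F : ℝ → ℝ) : Prop :=
  ContinuousOn F (Set.Ici 0) ∧ ConvexOn ℝ (Set.Ici 0) F ∧ F 0 = 0 ∧
  ConvexOn ℝ Set.univ (fun l : ℝ => Real.exp l * F (Real.exp (-l)))

/-- The displacement convexity class `DC_N`, `N ∈ [1,∞)`. -/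
def MemDCN (N : ℝ) (F : ℝ → ℝ) : Prop :=
  ContinuousOn F (Set.Ici 0) ∧ ConvexOn ℝ (Set.Ici 0) F ∧ F 0 = 0 ∧
  ConvexOn ℝ (Set.Ioi 0) (fun l : ℝ => l ^ N * F (l ^ (-N)))

/-- `F′(∞) = lim_{r → ∞} F(r)/r` (as an extended real number). -/
def derivAtInfty (F : ℝ → ℝ) : EReal :=
  Filter.limsup (fun r : ℝ => ((F r / r : ℝ) : EReal)) Filter.atTop

/-- The integral functional `𝔉(μ) = ∫ F(ρ) dm + F′(∞) μ^⊥(X)` associated to `F`,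
where `μ = ρ m + μ^⊥` is the Lebesgue decomposition of `μ` w.r.t. `m`. -/
def entFunctional (F : ℝ → ℝ) (m μ : Measure X) : EReal :=
  ((∫ x, F ((μ.rnDeriv m x).toReal) ∂m : ℝ) : EReal)
    + derivAtInfty F * ((μ.singularPart m Set.univ : ℝ≥0∞) : EReal)

/-- Distortion coefficients `β_t(x,y)` for `N = ∞`. -/
def betaInf (K : ℝ) (t : ℝ) (x y : X) : ℝ :=
  Real.exp (K * (1 - t ^ 2) * dist x y ^ 2 / 6)

/-- Distortion coefficients `β_t(x,y)` for `N ∈ [1,∞)` and `K ≤ 0`. -/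
def betaFin (K N : ℝ) (t : ℝ) (x y : X) : ℝ :=
  haveI := Classical.dec (K = 0 ∨ N = 1)
  if K = 0 ∨ N = 1 then 1
  else (Real.sinh (t * (Real.sqrt (|K| / (N - 1)) * dist x y)) /
       (t * Real.sinh (Real.sqrt (|K| / (N - 1)) * dist x y))) ^ (N - 1)

/-- The joint law of the endpoints `(γ(0), γ(1))` under `π`. -/
def endpointLaw (π : Measure (ℝ → X)) : Measure (X × X) :=
  π.map (fun γ => (γ 0, γ 1))

/-- The curvature-dimension condition `CD(K,∞)` (for `K ≤ 0`). -/
def IsCDinf (K : ℝ) (m : Measure X) : Prop :=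
  ∀ μ₀ μ₁ : Measure X, IsProbabilityMeasure μ₀ → IsProbabilityMeasure μ₁ →
    W2 μ₀ μ₁ ≠ ∞ →
    ∃ π : Measure (ℝ → X), IsGeoOpt μ₀ μ₁ π ∧
      ∃ κ₀ κ₁ : Kernel X X, IsMarkovKernel κ₀ ∧ IsMarkovKernel κ₁ ∧
        μ₀ ⊗ₘ κ₀ = endpointLaw π ∧
        μ₁ ⊗ₘ κ₁ = (endpointLaw π).map Prod.swap ∧
        ∀ F : ℝ → ℝ, MemDCinf F → ∀ t ∈ Set.Icc (0:ℝ) 1,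
          entFunctional F m (π.map (evalGeo t)) ≤
            ((1 - t : ℝ) : EReal) *
              ((∫ x₀, ∫ x₁, betaInf K (1 - t) x₀ x₁ *
                  F ((μ₀.rnDeriv m x₀).toReal / betaInf K (1 - t) x₀ x₁) ∂(κ₀ x₀) ∂m : ℝ) : EReal)
            + ((t : ℝ) : EReal) *
              ((∫ x₁, ∫ x₀, betaInf K t x₀ x₁ *
                  F ((μ₁.rnDeriv m x₁).toReal / betaInf K t x₀ x₁) ∂(κ₁ x₁) ∂m : ℝ) : EReal)
            + derivAtInfty F *
              ((ENNReal.ofReal (1 - t) * μ₀.singularPart m Set.univ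
                + ENNReal.ofReal t * μ₁.singularPart m Set.univ : ℝ≥0∞) : EReal)

/-- The curvature-dimension condition `CD(K,N)` for `K ≤ 0`, `N ∈ [1,∞)`. -/
def IsCDfin (K N : ℝ) (m : Measure X) : Prop :=
  ∀ μ₀ μ₁ : Measure X, IsProbabilityMeasure μ₀ → IsProbabilityMeasure μ₁ →
    W2 μ₀ μ₁ ≠ ∞ →
    ∃ π : Measure (ℝ → X), IsGeoOpt μ₀ μ₁ π ∧
      ∃ κ₀ κ₁ : Kernel X X, IsMarkovKernel κ₀ ∧ IsMarkovKernel κ₁ ∧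
        μ₀ ⊗ₘ κ₀ = endpointLaw π ∧
        μ₁ ⊗ₘ κ₁ = (endpointLaw π).map Prod.swap ∧
        ∀ F : ℝ → ℝ, MemDCN N F → ∀ t ∈ Set.Icc (0:ℝ) 1,
          entFunctional F m (π.map (evalGeo t)) ≤
            ((1 - t : ℝ) : EReal) *
              ((∫ x₀, ∫ x₁, betaFin K N (1 - t) x₀ x₁ *
                  F ((μ₀.rnDeriv m x₀).toReal / betaFin K N (1 - t) x₀ x₁) ∂(κ₀ x₀) ∂m : ℝ) : EReal)
            + ((t : ℝ) : EReal) *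
              ((∫ x₁, ∫ x₀, betaFin K N t x₀ x₁ *
                  F ((μ₁.rnDeriv m x₁).toReal / betaFin K N t x₀ x₁) ∂(κ₁ x₁) ∂m : ℝ) : EReal)
            + derivAtInfty F *
              ((ENNReal.ofReal (1 - t) * μ₀.singularPart m Set.univ
                + ENNReal.ofReal t * μ₁.singularPart m Set.univ : ℝ≥0∞) : EReal)

/-- The support of a measure on a metric space. -/
def msupport (μ : Measure X) : Set X := {x : X | ∀ ε > 0, 0 < μ (Metric.ball x ε)}

/-- `g` is an upper gradient of `u`: for every curve `γ : [0,1] → X` which is Lipschitz with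
constant `l` (in particular of length at most `l`),
`|u(γ(1)) - u(γ(0))| ≤ l ∫₀¹ g(γ(t)) dt`. -/
def IsUpperGradient (u : X → ℝ) (g : X → ℝ≥0∞) : Prop :=
  Measurable g ∧
  ∀ (γ : ℝ → X) (l : ℝ≥0), LipschitzOnWith l γ (Set.Icc 0 1) →
    ENNReal.ofReal |u (γ 1) - u (γ 0)| ≤ (l : ℝ≥0∞) * ∫⁻ t in Set.Icc (0:ℝ) 1, g (γ t)

/-- The evolution variational inequality (E.V.I.) condition for the entropy functional `E`:
from every absolutely continuous probability measure there starts a curve `(μ_t)_{t ≥ 0}` with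
`limsup_{h ↓ 0} (1/2h)(W₂²(ν,μ_{t+h}) - W₂²(ν,μ_t)) ≤ E(ν) - E(μ_t)` for all `t ≥ 0` and all
absolutely continuous probability measures `ν`. -/
def EVIGradientFlow (E : Measure X → EReal) (m : Measure X) : Prop :=
  ∀ μ₀ : Measure X, IsProbabilityMeasure μ₀ → μ₀ ≪ m →
    ∃ μ : ℝ → Measure X, μ 0 = μ₀ ∧ (∀ t : ℝ, 0 ≤ t → IsProbabilityMeasure (μ t)) ∧
      ∀ t : ℝ, 0 ≤ t → ∀ ν : Measure X, IsProbabilityMeasure ν → ν ≪ m →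
        Filter.limsup (fun h : ℝ =>
            (((1 / (2 * h)) * ((W2sq ν (μ (t + h))).toReal - (W2sq ν (μ t)).toReal) : ℝ) : EReal))
          (nhdsWithin 0 (Set.Ioi 0)) ≤ E ν - E (μ t)

lemma measurable_evalGeo' (t : ℝ) : Measurable (evalGeo (X := X) t) :=
  measurable_pi_apply t

section AuxLemmas

variable [OpensMeasurableSpace X]

lemma pow_two_eq_rpow (z : ℝ≥0∞) : z ^ 2 = z ^ (2:ℝ) := by
  rw [← ENNReal.rpow_natCast z 2]; norm_num

lemma pow_two_rpow_half (a Z : ℝ≥0∞) : (a ^ 2 * Z) ^ (1/2 : ℝ) = a * Z ^ (1/2 : ℝ) := by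
  rw [ENNReal.mul_rpow_of_nonneg _ _ (by norm_num : (0:ℝ) ≤ 1/2)]
  congr 1
  rw [pow_two_eq_rpow, ← ENNReal.rpow_mul]
  norm_num

lemma ennreal_iInf_rpow_half {ι : Sort*} (f : ι → ℝ≥0∞) :
    (⨅ i, f i) ^ (1/2 : ℝ) = ⨅ i, (f i) ^ (1/2 : ℝ) := by
  apply le_antisymm
  · exact le_iInf fun i => ENNReal.rpow_le_rpow (iInf_le f i) (by norm_num)
  · have h2 : (⨅ i, (f i) ^ (1/2:ℝ)) ^ (2:ℝ) ≤ ⨅ i, f i := by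
      refine le_iInf fun i => ?_
      calc (⨅ j, (f j) ^ (1/2:ℝ)) ^ (2:ℝ)
          ≤ ((f i) ^ (1/2:ℝ)) ^ (2:ℝ) :=
            ENNReal.rpow_le_rpow (iInf_le _ i) (by norm_num)
        _ = f i := by rw [← ENNReal.rpow_mul]; norm_num
    calc (⨅ i, (f i) ^ (1/2:ℝ))
        = ((⨅ i, (f i) ^ (1/2:ℝ)) ^ (2:ℝ)) ^ (1/2:ℝ) := by
          rw [← ENNReal.rpow_mul]; norm_num
      _ ≤ (⨅ i, f i) ^ (1/2:ℝ) := ENNReal.rpow_le_rpow h2 (by norm_num)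

omit [OpensMeasurableSpace X] in
lemma W2sq_le_cost (μ ν : Measure X) (σ : Measure (X × X))
    (h1 : σ.map Prod.fst = μ) (h2 : σ.map Prod.snd = ν) :
    W2sq μ ν ≤ ∫⁻ p, edist p.1 p.2 ^ 2 ∂σ :=
  iInf_le_of_le σ (iInf_le _ ⟨h1, h2⟩)

lemma measurable_edist_const (x : X) : Measurable (fun y : X => edist y x) :=
  (continuous_id.edist continuous_const).measurable

lemma W2sq_dirac (ν : Measure X) [IsProbabilityMeasure ν] (x : X) :
    W2sq ν (Measure.dirac x) = ∫⁻ y, edist y x ^ 2 ∂ν := by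
  have hmx : Measurable (fun y : X => (y, x)) := measurable_id.prodMk measurable_const
  have hme : Measurable (fun y : X => edist y x ^ 2) :=
    (measurable_edist_const x).pow_const 2
  apply le_antisymm
  · refine le_trans (W2sq_le_cost ν (Measure.dirac x) (ν.map fun y => (y, x)) ?_ ?_) ?_
    · rw [Measure.map_map measurable_fst hmx]
      exact Measure.map_id'
    · rw [Measure.map_map measurable_snd hmx]
      show ν.map (fun _ => x) = _
      rw [Measure.map_const, measure_univ, one_smul]
    · exact lintegral_map_le _ _
  · refine le_iInf fun σ => le_iInf fun hσ => ?_
    obtain ⟨hfst, hsnd⟩ := hσ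
    have hsx : MeasurableSet ({x}ᶜ : Set X) := (isClosed_singleton.measurableSet).compl
    have hnull : σ (Prod.snd ⁻¹' {x}ᶜ) = 0 := by
      rw [← Measure.map_apply measurable_snd hsx, hsnd, Measure.dirac_apply' _ hsx]
      simp
    have hae : ∀ᵐ p ∂σ, p.2 = x := by
      rw [ae_iff]
      convert hnull using 2
      rfl
    refine le_of_eq ?_
    calc ∫⁻ y, edist y x ^ 2 ∂ν = ∫⁻ p : X × X, edist p.1 x ^ 2 ∂σ := by
          rw [← hfst, lintegral_map hme measurable_fst]
      _ = ∫⁻ p : X × X, edist p.1 p.2 ^ 2 ∂σ :=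
          lintegral_congr_ae (hae.mono fun p hp => by simp only [hp])

lemma W2_triangle_core (σ : Measure (X × X)) (x : X)
    {G1 G2 : X × X → ℝ≥0∞} (hG1 : Measurable G1) (hG2 : Measurable G2)
    (htri : ∀ p, G1 p ≤ edist p.1 p.2 + G2 p) :
    (∫⁻ p, G1 p ^ 2 ∂σ) ^ (1/2:ℝ) ≤
      (∫⁻ p, edist p.1 p.2 ^ 2 ∂σ) ^ (1/2:ℝ) + (∫⁻ p, G2 p ^ 2 ∂σ) ^ (1/2:ℝ) := by
  set h : X × X → ℝ≥0∞ := fun p => G1 p - G2 p with hh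
  have hhm : Measurable h := hG1.sub hG2
  have hle1 : ∀ p, G1 p ≤ h p + G2 p := fun p => le_tsub_add
  have hle2 : ∀ p, h p ≤ edist p.1 p.2 := fun p => tsub_le_iff_right.mpr (htri p)
  have mink := ENNReal.lintegral_Lp_add_le (μ := σ) (p := 2)
    hhm.aemeasurable hG2.aemeasurable one_le_two
  simp only [Pi.add_apply] at mink
  have c1 : (∫⁻ p, G1 p ^ 2 ∂σ) ^ (1/2:ℝ) ≤ (∫⁻ p, (h p + G2 p) ^ (2:ℝ) ∂σ) ^ (1/2:ℝ) := by
    refine ENNReal.rpow_le_rpow (lintegral_mono fun p => ?_) (by norm_num)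
    rw [pow_two_eq_rpow]
    exact ENNReal.rpow_le_rpow (hle1 p) (by norm_num)
  have c2 : (∫⁻ p, h p ^ (2:ℝ) ∂σ) ^ (1/2:ℝ) ≤ (∫⁻ p, edist p.1 p.2 ^ 2 ∂σ) ^ (1/2:ℝ) := by
    refine ENNReal.rpow_le_rpow (lintegral_mono fun p => ?_) (by norm_num)
    rw [← pow_two_eq_rpow]
    exact pow_le_pow_left₀ zero_le (hle2 p) 2
  have c3 : (∫⁻ p, G2 p ^ (2:ℝ) ∂σ) ^ (1/2:ℝ) = (∫⁻ p, G2 p ^ 2 ∂σ) ^ (1/2:ℝ) := by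
    congr 1
    exact lintegral_congr fun p => (pow_two_eq_rpow _).symm
  calc (∫⁻ p, G1 p ^ 2 ∂σ) ^ (1/2:ℝ)
      ≤ (∫⁻ p, (h p + G2 p) ^ (2:ℝ) ∂σ) ^ (1/2:ℝ) := c1
    _ ≤ (∫⁻ p, h p ^ (2:ℝ) ∂σ) ^ (1/2:ℝ) + (∫⁻ p, G2 p ^ (2:ℝ) ∂σ) ^ (1/2:ℝ) := mink
    _ ≤ (∫⁻ p, edist p.1 p.2 ^ 2 ∂σ) ^ (1/2:ℝ) + (∫⁻ p, G2 p ^ 2 ∂σ) ^ (1/2:ℝ) := by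
        rw [← c3]
        exact add_le_add_left c2 _

lemma W2_triangle_dirac_fst (ν μ : Measure X) [IsProbabilityMeasure ν] [IsProbabilityMeasure μ]
    (x : X) : W2 ν (Measure.dirac x) ≤ W2 ν μ + W2 μ (Measure.dirac x) := by
  have hrw : W2 ν μ = ⨅ (σ : Measure (X × X)),
      ⨅ (_ : σ.map Prod.fst = ν ∧ σ.map Prod.snd = μ),
        (∫⁻ p, edist p.1 p.2 ^ 2 ∂σ) ^ (1/2:ℝ) := by
    rw [W2, W2sq, ennreal_iInf_rpow_half]
    exact iInf_congr fun σ => ennreal_iInf_rpow_half _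
  rw [hrw, ENNReal.iInf_add]
  refine le_iInf fun σ => ?_
  rw [ENNReal.iInf_add]
  refine le_iInf fun hσ => ?_
  obtain ⟨hfst, hsnd⟩ := hσ
  have hme : Measurable (fun y : X => edist y x ^ 2) := (measurable_edist_const x).pow_const 2
  have e1 : W2sq ν (Measure.dirac x) = ∫⁻ p : X × X, edist p.1 x ^ 2 ∂σ := by
    rw [W2sq_dirac ν x, ← hfst, lintegral_map hme measurable_fst]
  have e2 : ∫⁻ p : X × X, edist p.2 x ^ 2 ∂σ = W2sq μ (Measure.dirac x) := by
    rw [W2sq_dirac μ x, ← hsnd, lintegral_map hme measurable_snd]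
  have core := W2_triangle_core σ x
    ((measurable_edist_const x).comp measurable_fst)
    ((measurable_edist_const x).comp measurable_snd)
    (fun p => edist_triangle p.1 p.2 x)
  rw [W2, W2, e1, ← e2]
  exact core

lemma W2_triangle_dirac_snd (ν μ : Measure X) [IsProbabilityMeasure ν] [IsProbabilityMeasure μ]
    (x : X) : W2 μ (Measure.dirac x) ≤ W2 ν μ + W2 ν (Measure.dirac x) := by
  have hrw : W2 ν μ = ⨅ (σ : Measure (X × X)),
      ⨅ (_ : σ.map Prod.fst = ν ∧ σ.map Prod.snd = μ),
        (∫⁻ p, edist p.1 p.2 ^ 2 ∂σ) ^ (1/2:ℝ) := by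
    rw [W2, W2sq, ennreal_iInf_rpow_half]
    exact iInf_congr fun σ => ennreal_iInf_rpow_half _
  rw [hrw, ENNReal.iInf_add]
  refine le_iInf fun σ => ?_
  rw [ENNReal.iInf_add]
  refine le_iInf fun hσ => ?_
  obtain ⟨hfst, hsnd⟩ := hσ
  have hme : Measurable (fun y : X => edist y x ^ 2) := (measurable_edist_const x).pow_const 2
  have e1 : W2sq μ (Measure.dirac x) = ∫⁻ p : X × X, edist p.2 x ^ 2 ∂σ := by
    rw [W2sq_dirac μ x, ← hsnd, lintegral_map hme measurable_snd]
  have e2 : ∫⁻ p : X × X, edist p.1 x ^ 2 ∂σ = W2sq ν (Measure.dirac x) := by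
    rw [W2sq_dirac ν x, ← hfst, lintegral_map hme measurable_fst]
  have core := W2_triangle_core σ x
    ((measurable_edist_const x).comp measurable_snd)
    ((measurable_edist_const x).comp measurable_fst)
    (fun p => by
      calc edist p.2 x ≤ edist p.2 p.1 + edist p.1 x := edist_triangle _ _ _
        _ = edist p.1 p.2 + edist p.1 x := by rw [edist_comm])
  rw [W2, W2, e1, ← e2]
  exact core

end AuxLemmas

/-- Uniqueness of the Lebesgue decomposition of a finite measure, without any
sigma-finiteness assumption on `ν`. -/
lemma rnDeriv_eq_of_decomp {α : Type*} [MeasurableSpace α] {μ ν s : Measure α}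
    [IsFiniteMeasure μ] {f : α → ℝ≥0∞} (hf : Measurable f) (hs : s ⟂ₘ ν)
    (hadd : μ = s + ν.withDensity f) : μ.rnDeriv ν =ᵐ[ν] f := by
  haveI hdec : μ.HaveLebesgueDecomposition ν := ⟨⟨(s, f), hf, hs, hadd⟩⟩
  have h2 : μ = μ.singularPart ν + ν.withDensity (μ.rnDeriv ν) :=
    μ.haveLebesgueDecomposition_add ν
  obtain ⟨T, hTm, hsT, hνT⟩ := hs
  obtain ⟨T', hTm', hsT', hνT'⟩ := Measure.mutuallySingular_singularPart μ ν
  set V : Set α := T ∩ T' with hV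
  have hVm : MeasurableSet V := hTm.inter hTm'
  have hνVc : ν Vᶜ = 0 := by
    have : Vᶜ = Tᶜ ∪ T'ᶜ := by rw [hV, Set.compl_inter]
    rw [this]
    exact measure_union_null hνT hνT'
  have hwd : ν.withDensity f = ν.withDensity (μ.rnDeriv ν) := by
    ext S hS
    have splitf : ∀ (g : α → ℝ≥0∞), ν.withDensity g S = ν.withDensity g (S ∩ V) := by
      intro g
      have : ν.withDensity g (S ∩ V) + ν.withDensity g (S \ V) = ν.withDensity g S :=
        measure_inter_add_diff S hVm
      have hz : ν.withDensity g (S \ V) = 0 := by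
        rw [withDensity_apply g (hS.diff hVm)]
        exact setLIntegral_measure_zero _ _ (measure_mono_null (Set.diff_subset_compl S V) hνVc)
      rw [← this, hz, add_zero]
    rw [splitf f, splitf (μ.rnDeriv ν)]
    have hsV : s (S ∩ V) = 0 :=
      measure_mono_null (fun y hy => hy.2.1) hsT
    have hspV : μ.singularPart ν (S ∩ V) = 0 :=
      measure_mono_null (fun y hy => hy.2.2) hsT'
    have e1 : μ (S ∩ V) = ν.withDensity f (S ∩ V) := by
      rw [hadd]
      simp [Measure.add_apply, hsV]
    have e2 : μ (S ∩ V) = ν.withDensity (μ.rnDeriv ν) (S ∩ V) := by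
      conv_lhs => rw [h2]
      simp [Measure.add_apply, hspV]
    rw [← e1, ← e2]
  have hfin : ∫⁻ y, f y ∂ν ≠ ∞ := by
    have : ν.withDensity f Set.univ ≤ μ Set.univ := by
      conv_rhs => rw [hadd]
      simp [Measure.add_apply]
    rw [withDensity_apply f MeasurableSet.univ, setLIntegral_univ] at this
    exact (lt_of_le_of_lt this (measure_lt_top μ _)).ne
  exact ((withDensity_eq_iff hf.aemeasurable
    (Measure.measurable_rnDeriv μ ν).aemeasurable hfin).mp hwd).symm

/-- Pointwise lower bound for the Rényi integrand. -/
lemma renyiIntegrand_ge {N : ℝ} (hN : 1 ≤ N) {a z : ℝ≥0∞} (ha : a ≠ ∞)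
    (hz : z ≤ a) : z * a ^ (-(1/N)) ≤ renyiIntegrand N z := by
  rcases eq_or_ne z 0 with hz0 | hz0
  · simp [renyiIntegrand, hz0]
  · have hztop : z ≠ ∞ := fun h => ha (top_le_iff.mp (h ▸ hz))
    have h1 : renyiIntegrand N z = z ^ (1 - 1/N) := by
      simp only [renyiIntegrand, if_neg hz0]
    have hsplit : z ^ (1 - 1/N) = z * z ^ (-(1/N)) := by
      rw [show (1 - 1/N) = 1 + (-(1/N)) by ring, ENNReal.rpow_add _ _ hz0 hztop,
        ENNReal.rpow_one]
    rw [h1, hsplit]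
    refine mul_le_mul_right ?_ z
    rw [ENNReal.rpow_neg, ENNReal.rpow_neg]
    exact ENNReal.inv_le_inv.mpr (ENNReal.rpow_le_rpow hz (by positivity))

/-- Pointwise upper bound for the Rényi integrand. -/
lemma renyiIntegrand_le {N : ℝ} (hN : 1 ≤ N) {b z : ℝ≥0∞} (hb0 : b ≠ 0) (hbtop : b ≠ ∞)
    (hz : z = 0 ∨ b ≤ z) : renyiIntegrand N z ≤ z * b ^ (-(1/N)) := by
  rcases hz with hz0 | hbz
  · simp [renyiIntegrand, hz0]
  · have hz0 : z ≠ 0 := fun h => hb0 (le_antisymm (h ▸ hbz) zero_le)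
    have h1 : renyiIntegrand N z = z ^ (1 - 1/N) := by
      simp only [renyiIntegrand, if_neg hz0]
    rcases eq_or_ne z ∞ with hztop | hztop
    · have hbinv : b ^ (-(1/N)) ≠ 0 := by
        rw [ENNReal.rpow_neg, ne_eq, ENNReal.inv_eq_zero]
        exact ENNReal.rpow_ne_top_of_nonneg (by positivity) hbtop
      rw [hztop, ENNReal.top_mul hbinv]
      exact le_top
    · have hsplit : z ^ (1 - 1/N) = z * z ^ (-(1/N)) := by
        rw [show (1 - 1/N) = 1 + (-(1/N)) by ring, ENNReal.rpow_add _ _ hz0 hztop,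
          ENNReal.rpow_one]
      rw [h1, hsplit]
      refine mul_le_mul_right ?_ z
      rw [ENNReal.rpow_neg, ENNReal.rpow_neg]
      exact ENNReal.inv_le_inv.mpr (ENNReal.rpow_le_rpow hbz (by positivity))


end

/-- The density bound along a geodesic from a normalized half of a ball to the Dirac mass
at its center, under strong displacement convexity of `E_N`. -/
theorem renyi_sdc_density_bound_to_dirac
    {X : Type*} [MetricSpace X] [CompleteSpace X] [MeasurableSpace X] [BorelSpace X]
    (m : Measure X) (hgeo : IsGeodesicSpace X)
    (hsupp : ∀ x : X, ∀ ε > 0, 0 < m (Metric.ball x ε))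
    {N : ℝ} (hN : 1 ≤ N) (hsdc : StronglyDisplacementConvex (renyiEntropy N m))
    (x : X) (r : ℝ) (hr : 0 < r)
    (hB0 : 0 < m (Metric.ball x r)) (hBfin : m (Metric.ball x r) ≠ ∞)
    (Bp : Set X) (hBpmeas : MeasurableSet Bp) (hBpsub : Bp ⊆ Metric.ball x r)
    (hBphalf : m Bp = m (Metric.ball x r) / 2)
    (π : Measure (ℝ → X))
    (hπ : IsGeoOpt ((m Bp)⁻¹ • m.restrict Bp) (Measure.dirac x) π) :
    ∀ t ∈ Set.Icc (0:ℝ) (1/2),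
      ∀ᵐ y ∂m, (π.map (evalGeo t)).rnDeriv m y ≤
        ENNReal.ofReal ((2:ℝ) ^ (N + 1)) / m (Metric.ball x r) := by
  intro t ht
  obtain ⟨ht0, ht12⟩ := ht
  have ht1 : t ≤ 1 := le_trans ht12 (by norm_num)
  have hNpos : (0:ℝ) < N := lt_of_lt_of_le one_pos hN
  set c : ℝ≥0∞ := m (Metric.ball x r) with hc
  set C : ℝ≥0∞ := ENNReal.ofReal ((2:ℝ) ^ (N + 1)) / c with hCdef
  set μt : Measure X := π.map (evalGeo t) with hμt
  by_cases hLeb : μt.HaveLebesgueDecomposition m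
  swap
  · rw [Measure.rnDeriv_of_not_haveLebesgueDecomposition hLeb]
    exact Filter.Eventually.of_forall fun y => zero_le
  by_contra hcon
  set ρ : X → ℝ≥0∞ := μt.rnDeriv m with hρ
  obtain ⟨hπprob, hπgeo, hπ0, hπ1, _⟩ := hπ
  haveI := hπprob
  haveI : IsProbabilityMeasure μt :=
    Measure.isProbabilityMeasure_map (measurable_evalGeo' t).aemeasurable
  have hc0 : c ≠ 0 := hB0.ne'
  have hcT : c ≠ ∞ := hBfin
  have hCtop : C ≠ ∞ := (ENNReal.div_lt_top ENNReal.ofReal_ne_top hc0).ne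
  have hmeasρ : Measurable ρ := Measure.measurable_rnDeriv μt m
  have hconm : m {y | C < ρ y} ≠ 0 := by
    intro h0
    refine hcon (ae_iff.mpr ?_)
    have hset : {y | ¬ ρ y ≤ C} = {y | C < ρ y} := by
      ext y; exact not_le
    rw [hset]
    exact h0
  -- extract a level C' > C whose super-level set has positive measure
  have hsub : {y | C < ρ y} ⊆ ⋃ n : ℕ, {y | C + (((n+1:ℕ)):ℝ≥0∞)⁻¹ ≤ ρ y} := by
    intro y hy
    simp only [Set.mem_setOf_eq, Set.mem_iUnion]
    rcases eq_or_ne (ρ y) ∞ with hyt | hyt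
    · exact ⟨0, by rw [hyt]; exact le_top⟩
    · have hpos : ρ y - C ≠ 0 := (tsub_pos_iff_lt.mpr hy).ne'
      obtain ⟨n, hn⟩ := ENNReal.exists_inv_nat_lt hpos
      refine ⟨n, ?_⟩
      have h1 : (((n+1:ℕ)):ℝ≥0∞)⁻¹ ≤ ((n:ℕ):ℝ≥0∞)⁻¹ :=
        ENNReal.inv_le_inv.mpr (by exact_mod_cast Nat.le_succ n)
      calc C + (((n+1:ℕ)):ℝ≥0∞)⁻¹ ≤ C + (ρ y - C) :=
            add_le_add_right (le_trans h1 hn.le) C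
        _ = ρ y := add_tsub_cancel_of_le hy.le
  have hex : ∃ n : ℕ, m {y | C + (((n+1:ℕ)):ℝ≥0∞)⁻¹ ≤ ρ y} ≠ 0 := by
    by_contra hall
    push_neg at hall
    exact hconm (measure_mono_null hsub (measure_iUnion_null hall))
  obtain ⟨n, hAn⟩ := hex
  set ε : ℝ≥0∞ := (((n+1:ℕ)):ℝ≥0∞)⁻¹ with hε
  have hε0 : ε ≠ 0 := ENNReal.inv_ne_zero.mpr (ENNReal.natCast_ne_top _)
  have hεT : ε ≠ ∞ := ENNReal.inv_ne_top.mpr (by exact_mod_cast Nat.succ_ne_zero n)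
  set C' : ℝ≥0∞ := C + ε with hC'
  have hCC' : C < C' := ENNReal.lt_add_right hCtop hε0
  have hC'0 : C' ≠ 0 := ((zero_le : (0:ℝ≥0∞) ≤ C).trans_lt hCC').ne'
  have hC'T : C' ≠ ∞ := ENNReal.add_ne_top.mpr ⟨hCtop, hεT⟩
  set A : Set X := {y | C' ≤ ρ y} with hA
  have hAm : MeasurableSet A := measurableSet_le measurable_const hmeasρ
  have hmA : m A ≠ 0 := hAn
  -- the mass p of the bad set
  set p : ℝ≥0∞ := μt A with hp
  have hρ_int : C' * m A ≤ ∫⁻ y in A, ρ y ∂m := by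
    have hmono : ∀ᵐ y ∂(m.restrict A), C' ≤ ρ y :=
      (ae_restrict_iff' hAm).mpr (Filter.Eventually.of_forall fun y hy => hy)
    calc C' * m A = ∫⁻ _ in A, C' ∂m := (setLIntegral_const A C').symm
      _ ≤ ∫⁻ y in A, ρ y ∂m := lintegral_mono_ae hmono
  have hp0 : p ≠ 0 := by
    intro h0
    have h1 : ∫⁻ y in A, ρ y ∂m ≤ μt A := Measure.setLIntegral_rnDeriv_le A
    have h2 : C' * m A = 0 :=
      le_antisymm (le_trans hρ_int (le_trans h1 (le_of_eq (hp.symm.trans h0)))) zero_le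
    exact (mul_ne_zero hC'0 hmA) h2
  have hpT : p ≠ ∞ := (measure_lt_top μt A).ne
  have hpinv0 : p⁻¹ ≠ 0 := ENNReal.inv_ne_zero.mpr hpT
  have hpinvT : p⁻¹ ≠ ∞ := ENNReal.inv_ne_top.mpr hp0
  -- the restricted, renormalized measure on geodesics
  set G : Set (ℝ → X) := (evalGeo t) ⁻¹' A with hG
  have hGm : MeasurableSet G := (measurable_evalGeo' t) hAm
  set π' : Measure (ℝ → X) := p⁻¹ • π.restrict G with hπ'
  have hπG : π G = p := by
    rw [hp, hμt, Measure.map_apply (measurable_evalGeo' t) hAm, hG]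
  haveI hπ'prob : IsProbabilityMeasure π' := by
    constructor
    rw [hπ', Measure.smul_apply, Measure.restrict_apply_univ, hπG, smul_eq_mul,
      ENNReal.inv_mul_cancel hp0 hpT]
  have hac : π' ≪ π := by
    refine Measure.AbsolutelyContinuous.mk fun s hs h0 => ?_
    rw [hπ', Measure.smul_apply, smul_eq_mul]
    have hle : π.restrict G s ≤ π s := Measure.le_iff'.mp Measure.restrict_le_self s
    have hz : π.restrict G s = 0 := le_antisymm (by rw [← h0]; exact hle) zero_le
    rw [hz, mul_zero]
  have hgeo'' : ∀ᵐ γ ∂π', IsGeodesicMap γ := hπgeo.filter_mono hac.ae_le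
  have hsx : MeasurableSet ({x}ᶜ : Set X) := (isClosed_singleton.measurableSet).compl
  have h1x : ∀ᵐ γ ∂π, γ 1 = x := by
    rw [ae_iff]
    have hset : {γ : ℝ → X | ¬ γ 1 = x} = (evalGeo 1) ⁻¹' {x}ᶜ := by
      ext γ; simp [evalGeo]
    rw [hset, ← Measure.map_apply (measurable_evalGeo' 1) hsx, hπ1,
      Measure.dirac_apply' _ hsx]
    simp
  have h0Bp : ∀ᵐ γ ∂π, γ 0 ∈ Bp := by
    rw [ae_iff]
    have hBpc : MeasurableSet Bpᶜ := hBpmeas.compl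
    have hset : {γ : ℝ → X | ¬ γ 0 ∈ Bp} = (evalGeo 0) ⁻¹' Bpᶜ := by
      ext γ; simp [evalGeo]
    rw [hset, ← Measure.map_apply (measurable_evalGeo' 0) hBpc, hπ0,
      Measure.smul_apply, Measure.restrict_apply hBpc, smul_eq_mul]
    simp [Set.compl_inter_self]
  have h1x' : ∀ᵐ γ ∂π', γ 1 = x := h1x.filter_mono hac.ae_le
  have h0Bp' : ∀ᵐ γ ∂π', γ 0 ∈ Bp := h0Bp.filter_mono hac.ae_le
  -- the basic quantity D and the distance integrals
  have hedx : Measurable (fun γ : ℝ → X => edist (γ 0) x ^ 2) :=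
    ((measurable_edist_const x).comp (measurable_pi_apply 0)).pow_const 2
  set D : ℝ≥0∞ := ∫⁻ γ, edist (γ 0) x ^ 2 ∂π' with hD
  have hDfin : D ≠ ∞ := by
    have hb : ∀ᵐ γ ∂π', edist (γ 0) x ^ 2 ≤ ENNReal.ofReal r ^ 2 := by
      filter_upwards [h0Bp'] with γ hγ
      have hdr : dist (γ 0) x < r := Metric.mem_ball.mp (hBpsub hγ)
      refine pow_le_pow_left₀ zero_le ?_ 2
      rw [edist_dist]
      exact ENNReal.ofReal_le_ofReal hdr.le
    have hle := lintegral_mono_ae hb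
    rw [lintegral_const, measure_univ, mul_one] at hle
    exact (lt_of_le_of_lt hle (ENNReal.pow_lt_top ENNReal.ofReal_lt_top)).ne
  have hkey : ∀ s ∈ Set.Icc (0:ℝ) 1, ∀ u ∈ Set.Icc (0:ℝ) 1,
      ∫⁻ γ, edist (γ s) (γ u) ^ 2 ∂π' = ENNReal.ofReal |s - u| ^ 2 * D := by
    intro s hs u hu
    rw [hD, ← lintegral_const_mul _ hedx]
    refine lintegral_congr_ae ?_
    filter_upwards [hgeo'', h1x'] with γ hγ hγ1
    have hd : dist (γ s) (γ u) = |s - u| * dist (γ 0) (γ 1) := hγ s hs u hu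
    rw [edist_dist, hd, hγ1, ENNReal.ofReal_mul (abs_nonneg _), ← edist_dist, mul_pow]
  have hkeyx : ∀ s ∈ Set.Icc (0:ℝ) 1,
      ∫⁻ γ, edist (γ s) x ^ 2 ∂π' = ENNReal.ofReal (1 - s) ^ 2 * D := by
    intro s hs
    have h1 : ∫⁻ γ, edist (γ s) x ^ 2 ∂π' = ∫⁻ γ, edist (γ s) (γ 1) ^ 2 ∂π' :=
      lintegral_congr_ae (h1x'.mono fun γ hγ => by simp only [hγ])
    rw [h1, hkey s hs 1 (by norm_num), abs_of_nonpos (by linarith [hs.2]), neg_sub]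
  -- the curve of pushforwards of π'
  have hΓprob : ∀ s : ℝ, IsProbabilityMeasure (π'.map (evalGeo s)) := fun s =>
    Measure.isProbabilityMeasure_map (measurable_evalGeo' s).aemeasurable
  have hmap_int : ∀ s : ℝ,
      ∫⁻ y, edist y x ^ 2 ∂(π'.map (evalGeo s)) = ∫⁻ γ, edist (γ s) x ^ 2 ∂π' := fun s =>
    lintegral_map ((measurable_edist_const x).pow_const 2) (measurable_evalGeo' s)
  set R : ℝ≥0∞ := D ^ (1/2:ℝ) with hR
  have hRT : R ≠ ∞ := ENNReal.rpow_ne_top_of_nonneg (by norm_num) hDfin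
  have hW2d : ∀ s ∈ Set.Icc (0:ℝ) 1,
      W2 (π'.map (evalGeo s)) (Measure.dirac x) = ENNReal.ofReal (1 - s) * R := by
    intro s hs
    haveI := hΓprob s
    rw [W2, W2sq_dirac _ x, hmap_int s, hkeyx s hs, pow_two_rpow_half]
  have hΓ1 : π'.map (evalGeo 1) = Measure.dirac x := by
    have hcongr : evalGeo (X := X) 1 =ᵐ[π'] fun _ => x := h1x'
    rw [Measure.map_congr hcongr, Measure.map_const, measure_univ, one_smul]
  have hW01 : W2 (π'.map (evalGeo 0)) (π'.map (evalGeo 1)) = R := by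
    rw [hΓ1, hW2d 0 (by norm_num)]
    norm_num
  have hupper : ∀ s ∈ Set.Icc (0:ℝ) 1, ∀ u ∈ Set.Icc (0:ℝ) 1,
      W2 (π'.map (evalGeo s)) (π'.map (evalGeo u)) ≤ ENNReal.ofReal |s - u| * R := by
    intro s hs u hu
    have hpair : Measurable (fun γ : ℝ → X => (γ s, γ u)) :=
      (measurable_pi_apply s).prodMk (measurable_pi_apply u)
    have hcost : W2sq (π'.map (evalGeo s)) (π'.map (evalGeo u)) ≤
        ∫⁻ q, edist q.1 q.2 ^ 2 ∂(π'.map (fun γ => (γ s, γ u))) := by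
      refine W2sq_le_cost _ _ _ ?_ ?_
      · rw [Measure.map_map measurable_fst hpair]; rfl
      · rw [Measure.map_map measurable_snd hpair]; rfl
    have hcost2 : ∫⁻ q, edist q.1 q.2 ^ 2 ∂(π'.map (fun γ => (γ s, γ u))) ≤
        ∫⁻ γ, edist (γ s) (γ u) ^ 2 ∂π' := lintegral_map_le _ _
    have hcost3 := le_trans hcost (hcost2.trans_eq (hkey s hs u hu))
    rw [W2]
    calc W2sq (π'.map (evalGeo s)) (π'.map (evalGeo u)) ^ (1/2:ℝ)
        ≤ (ENNReal.ofReal |s - u| ^ 2 * D) ^ (1/2:ℝ) :=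
          ENNReal.rpow_le_rpow hcost3 (by norm_num)
      _ = ENNReal.ofReal |s - u| * R := pow_two_rpow_half _ _
  have hgeodeq : ∀ s ∈ Set.Icc (0:ℝ) 1, ∀ u ∈ Set.Icc (0:ℝ) 1,
      W2 (π'.map (evalGeo s)) (π'.map (evalGeo u)) = ENNReal.ofReal |s - u| * R := by
    intro s hs u hu
    haveI := hΓprob s; haveI := hΓprob u
    refine le_antisymm (hupper s hs u hu) ?_
    rcases le_total s u with hsu | hus
    · have tri := W2_triangle_dirac_fst (π'.map (evalGeo s)) (π'.map (evalGeo u)) x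
      rw [hW2d s hs, hW2d u hu] at tri
      have hsplit : ENNReal.ofReal (1 - s) = ENNReal.ofReal (u - s) + ENNReal.ofReal (1 - u) := by
        rw [← ENNReal.ofReal_add (by linarith) (by linarith [hu.2])]
        congr 1; ring
      rw [hsplit, add_mul] at tri
      have hfin : ENNReal.ofReal (1 - u) * R ≠ ∞ := ENNReal.mul_ne_top ENNReal.ofReal_ne_top hRT
      have hlow := (ENNReal.add_le_add_iff_right hfin).mp tri
      rwa [abs_of_nonpos (by linarith), neg_sub]
    · have tri := W2_triangle_dirac_snd (π'.map (evalGeo s)) (π'.map (evalGeo u)) x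
      rw [hW2d s hs, hW2d u hu] at tri
      have hsplit : ENNReal.ofReal (1 - u) = ENNReal.ofReal (s - u) + ENNReal.ofReal (1 - s) := by
        rw [← ENNReal.ofReal_add (by linarith) (by linarith [hs.2])]
        congr 1; ring
      rw [hsplit, add_mul] at tri
      have hfin : ENNReal.ofReal (1 - s) * R ≠ ∞ := ENNReal.mul_ne_top ENNReal.ofReal_ne_top hRT
      have hlow := (ENNReal.add_le_add_iff_right hfin).mp tri
      rwa [abs_of_nonneg (by linarith)]
  have hgeod : IsW2Geodesic (fun s => π'.map (evalGeo s)) := by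
    refine ⟨fun s _ => hΓprob s, ?_, ?_⟩
    · show W2 (π'.map (evalGeo 0)) (π'.map (evalGeo 1)) ≠ ∞
      rw [hW01]; exact hRT
    · intro s hs u hu
      show W2 (π'.map (evalGeo s)) (π'.map (evalGeo u)) =
        ENNReal.ofReal |s - u| * W2 (π'.map (evalGeo 0)) (π'.map (evalGeo 1))
      rw [hW01, hgeodeq s hs u hu]
  -- strong displacement convexity applied to the restricted curve
  have hsdc' := hsdc (fun s => π'.map (evalGeo s)) hgeod t ⟨ht0, ht1⟩
  simp only [renyiEntropy] at hsdc'
  set It : ℝ≥0∞ := ∫⁻ y, renyiIntegrand N ((π'.map (evalGeo t)).rnDeriv m y) ∂m with hIt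
  set I0 : ℝ≥0∞ := ∫⁻ y, renyiIntegrand N ((π'.map (evalGeo 0)).rnDeriv m y) ∂m with hI0
  set I1 : ℝ≥0∞ := ∫⁻ y, renyiIntegrand N ((π'.map (evalGeo 1)).rnDeriv m y) ∂m with hI1
  have hterm2 : ((t:ℝ):EReal) * (-(I1 : EReal)) ≤ 0 := by
    rw [mul_neg, ← neg_zero]
    exact EReal.neg_le_neg_iff.mpr
      (mul_nonneg (by exact_mod_cast ht0) (EReal.coe_ennreal_nonneg _))
  have hsdc2 : -(It : EReal) ≤ ((1 - t:ℝ):EReal) * (-(I0 : EReal)) := by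
    calc -(It : EReal) ≤ ((1 - t:ℝ):EReal) * (-(I0 : EReal)) + ((t:ℝ):EReal) * (-(I1 : EReal)) :=
          hsdc'
      _ ≤ ((1 - t:ℝ):EReal) * (-(I0 : EReal)) + 0 := add_le_add_right hterm2 _
      _ = ((1 - t:ℝ):EReal) * (-(I0 : EReal)) := add_zero _
  have hENN : ENNReal.ofReal (1 - t) * I0 ≤ It := by
    have h1 : (((ENNReal.ofReal (1 - t)) * I0 : ℝ≥0∞) : EReal) ≤ ((It : ℝ≥0∞) : EReal) := by
      rw [EReal.coe_ennreal_mul]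
      have h2 : ((ENNReal.ofReal (1 - t) : ℝ≥0∞) : EReal) = ((1 - t : ℝ) : EReal) := by
        rw [EReal.coe_ennreal_ofReal, max_eq_left (by linarith)]
      rw [h2]
      have h3 := hsdc2
      rw [mul_neg] at h3
      exact EReal.neg_le_neg_iff.mp h3
    exact EReal.coe_ennreal_le_coe_ennreal_iff.mp h1
  -- the density of the restricted curve at time 0
  have hmBp : m Bp = c / 2 := hBphalf
  have hmBp0 : m Bp ≠ 0 := by
    rw [hmBp]
    simp [ENNReal.div_eq_zero_iff, hc0]
  have hmBpT : m Bp ≠ ∞ := by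
    rw [hmBp]
    exact (lt_of_le_of_lt ENNReal.half_le_self (lt_top_iff_ne_top.mpr hcT)).ne
  set k : ℝ≥0∞ := (m Bp)⁻¹ with hk
  set a : ℝ≥0∞ := p⁻¹ * k with haN
  have hk0 : k ≠ 0 := ENNReal.inv_ne_zero.mpr hmBpT
  have hkT : k ≠ ∞ := ENNReal.inv_ne_top.mpr hmBp0
  have ha0 : a ≠ 0 := mul_ne_zero hpinv0 hk0
  have haT : a ≠ ∞ := ENNReal.mul_ne_top hpinvT hkT
  have hν0le : π'.map (evalGeo 0) ≤ a • m.restrict Bp := by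
    have hle1 : π'.map (evalGeo 0) ≤ p⁻¹ • (π.map (evalGeo 0)) := by
      rw [hπ', Measure.map_smul]
      refine Measure.le_iff.mpr fun s hs => ?_
      rw [Measure.smul_apply, Measure.smul_apply, smul_eq_mul, smul_eq_mul]
      exact mul_le_mul_right
        (Measure.le_iff.mp (Measure.map_mono Measure.restrict_le_self (measurable_evalGeo' 0)) s hs) _
    calc π'.map (evalGeo 0) ≤ p⁻¹ • (π.map (evalGeo 0)) := hle1
      _ = a • m.restrict Bp := by rw [hπ0, smul_smul, haN, hk]
  haveI : IsFiniteMeasure (m.restrict Bp) :=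
    ⟨by rw [Measure.restrict_apply_univ]; exact lt_top_iff_ne_top.mpr hmBpT⟩
  haveI : IsProbabilityMeasure (π'.map (evalGeo 0)) := hΓprob 0
  have hacBp : π'.map (evalGeo 0) ≪ m.restrict Bp := by
    refine Measure.AbsolutelyContinuous.mk fun s hs h0 => ?_
    have hle := Measure.le_iff.mp hν0le s hs
    rw [Measure.smul_apply, smul_eq_mul, h0, mul_zero] at hle
    exact le_antisymm hle zero_le
  set g : X → ℝ≥0∞ := (π'.map (evalGeo 0)).rnDeriv (m.restrict Bp) with hg
  have hgm : Measurable g := Measure.measurable_rnDeriv _ _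
  have hgwd : (m.restrict Bp).withDensity g = π'.map (evalGeo 0) :=
    Measure.withDensity_rnDeriv_eq _ _ hacBp
  have hf0wd : m.withDensity (Bp.indicator g) = π'.map (evalGeo 0) := by
    rw [withDensity_indicator hBpmeas, hgwd]
  have hrn0 : (π'.map (evalGeo 0)).rnDeriv m =ᵐ[m] Bp.indicator g := by
    refine rnDeriv_eq_of_decomp (hgm.indicator hBpmeas) Measure.MutuallySingular.zero_left ?_
    rw [zero_add, hf0wd]
  have hgbd : ∀ᵐ y ∂(m.restrict Bp), g y ≤ a := by
    refine ae_le_of_forall_setLIntegral_le_of_sigmaFinite hgm fun s hs _ => ?_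
    have h1 : ∫⁻ y in s, g y ∂(m.restrict Bp) = π'.map (evalGeo 0) s := by
      rw [← withDensity_apply g hs, hgwd]
    have h2 : π'.map (evalGeo 0) s ≤ a * (m.restrict Bp) s := by
      have hle := Measure.le_iff.mp hν0le s hs
      rwa [Measure.smul_apply, smul_eq_mul] at hle
    rw [h1, setLIntegral_const]
    exact h2
  have hind_bd : ∀ᵐ y ∂m, Bp.indicator g y ≤ a := by
    have h3 := (ae_restrict_iff' hBpmeas).mp hgbd
    filter_upwards [h3] with y hy
    by_cases hyBp : y ∈ Bp
    · rw [Set.indicator_of_mem hyBp]; exact hy hyBp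
    · rw [Set.indicator_of_notMem hyBp]; exact zero_le
  have hint1 : ∫⁻ y, Bp.indicator g y ∂m = 1 := by
    have h4 : m.withDensity (Bp.indicator g) Set.univ = 1 := by
      rw [hf0wd]; exact measure_univ
    rwa [withDensity_apply _ MeasurableSet.univ, setLIntegral_univ] at h4
  have hI0ge : a ^ (-(1/N):ℝ) ≤ I0 := by
    have hpt : ∀ᵐ y ∂m, Bp.indicator g y * a ^ (-(1/N):ℝ) ≤
        renyiIntegrand N ((π'.map (evalGeo 0)).rnDeriv m y) := by
      filter_upwards [hind_bd, hrn0] with y h1 h2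
      rw [h2]
      exact renyiIntegrand_ge hN haT h1
    calc a ^ (-(1/N):ℝ) = (∫⁻ y, Bp.indicator g y ∂m) * a ^ (-(1/N):ℝ) := by
          rw [hint1, one_mul]
      _ = ∫⁻ y, Bp.indicator g y * a ^ (-(1/N):ℝ) ∂m :=
          (lintegral_mul_const _ (hgm.indicator hBpmeas)).symm
      _ ≤ I0 := lintegral_mono_ae hpt
  -- the density of the restricted curve at time t
  set b : ℝ≥0∞ := p⁻¹ * C' with hb
  have hb0 : b ≠ 0 := mul_ne_zero hpinv0 hC'0
  have hbT : b ≠ ∞ := ENNReal.mul_ne_top hpinvT hC'T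
  have hΓt : π'.map (evalGeo t) = p⁻¹ • μt.restrict A := by
    rw [hπ', Measure.map_smul]
    congr 1
    rw [hG, ← Measure.restrict_map (measurable_evalGeo' t) hAm, ← hμt]
  have hsing : (p⁻¹ • (μt.singularPart m).restrict A) ⟂ₘ m :=
    ((Measure.mutuallySingular_singularPart μt m).mono Measure.restrict_le_self le_rfl).smul p⁻¹
  have hdec : π'.map (evalGeo t) =
      (p⁻¹ • (μt.singularPart m).restrict A) + m.withDensity (fun y => p⁻¹ * A.indicator ρ y) := by
    rw [hΓt]
    conv_lhs => rw [μt.haveLebesgueDecomposition_add m]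
    rw [← hρ, Measure.restrict_add, smul_add]
    congr 1
    rw [restrict_withDensity hAm, ← withDensity_indicator hAm,
      ← withDensity_smul _ (hmeasρ.indicator hAm)]
    rfl
  haveI : IsProbabilityMeasure (π'.map (evalGeo t)) := hΓprob t
  have hrnt : (π'.map (evalGeo t)).rnDeriv m =ᵐ[m] fun y => p⁻¹ * A.indicator ρ y :=
    rnDeriv_eq_of_decomp (measurable_const.mul (hmeasρ.indicator hAm)) hsing hdec
  have hintt : ∫⁻ y, p⁻¹ * A.indicator ρ y ∂m ≤ 1 := by
    rw [lintegral_const_mul _ (hmeasρ.indicator hAm), lintegral_indicator hAm]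
    have h1 : ∫⁻ y in A, ρ y ∂m ≤ μt A := Measure.setLIntegral_rnDeriv_le A
    calc p⁻¹ * ∫⁻ y in A, ρ y ∂m ≤ p⁻¹ * p := mul_le_mul_right (h1.trans_eq hp.symm) _
      _ = 1 := ENNReal.inv_mul_cancel hp0 hpT
  have hItle : It ≤ b ^ (-(1/N):ℝ) := by
    have hpt : ∀ᵐ y ∂m, renyiIntegrand N ((π'.map (evalGeo t)).rnDeriv m y) ≤
        (p⁻¹ * A.indicator ρ y) * b ^ (-(1/N):ℝ) := by
      filter_upwards [hrnt] with y h2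
      rw [h2]
      refine renyiIntegrand_le hN hb0 hbT ?_
      by_cases hyA : y ∈ A
      · right
        rw [Set.indicator_of_mem hyA, hb]
        exact mul_le_mul_right hyA p⁻¹
      · left
        rw [Set.indicator_of_notMem hyA, mul_zero]
    calc It ≤ ∫⁻ y, (p⁻¹ * A.indicator ρ y) * b ^ (-(1/N):ℝ) ∂m := lintegral_mono_ae hpt
      _ = (∫⁻ y, p⁻¹ * A.indicator ρ y ∂m) * b ^ (-(1/N):ℝ) :=
          lintegral_mul_const _ (measurable_const.mul (hmeasρ.indicator hAm))
      _ ≤ 1 * b ^ (-(1/N):ℝ) := mul_le_mul_left hintt _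
      _ = b ^ (-(1/N):ℝ) := one_mul _
  -- combine everything
  have h2inv : (2:ℝ≥0∞)⁻¹ ≤ ENNReal.ofReal (1 - t) := by
    have hhalf : ENNReal.ofReal (1/2:ℝ) = (2:ℝ≥0∞)⁻¹ := by
      rw [one_div, ENNReal.ofReal_inv_of_pos two_pos, ENNReal.ofReal_ofNat]
    rw [← hhalf]
    exact ENNReal.ofReal_le_ofReal (by linarith)
  have hchain : (2:ℝ≥0∞)⁻¹ * a ^ (-(1/N):ℝ) ≤ b ^ (-(1/N):ℝ) :=
    le_trans (mul_le_mul' h2inv hI0ge) (le_trans hENN hItle)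
  have hraise := ENNReal.rpow_le_rpow hchain hNpos.le
  rw [ENNReal.mul_rpow_of_nonneg _ _ hNpos.le, ← ENNReal.rpow_mul, ← ENNReal.rpow_mul,
    (show -(1/N) * N = -1 by field_simp), ENNReal.rpow_neg_one, ENNReal.rpow_neg_one] at hraise
  have hainv : a⁻¹ = p * m Bp := by
    rw [haN, ENNReal.mul_inv (Or.inl hpinv0) (Or.inl hpinvT), inv_inv, hk, inv_inv]
  have hbinv : b⁻¹ = p * C'⁻¹ := by
    rw [hb, ENNReal.mul_inv (Or.inl hpinv0) (Or.inl hpinvT), inv_inv]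
  rw [hainv, hbinv] at hraise
  have hraise2 : (2:ℝ≥0∞)⁻¹ ^ (N:ℝ) * m Bp ≤ C'⁻¹ := by
    have h1 : ((2:ℝ≥0∞)⁻¹ ^ (N:ℝ) * m Bp) * p ≤ C'⁻¹ * p := by
      calc ((2:ℝ≥0∞)⁻¹ ^ (N:ℝ) * m Bp) * p = (2:ℝ≥0∞)⁻¹ ^ (N:ℝ) * (p * m Bp) := by ring
        _ ≤ p * C'⁻¹ := hraise
        _ = C'⁻¹ * p := mul_comm _ _
    exact (ENNReal.mul_le_mul_iff_left hp0 hpT).mp h1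
  have h2N0 : (2:ℝ≥0∞) ^ (N:ℝ) ≠ 0 := by
    simp [ENNReal.rpow_eq_zero_iff]
  have h2NT : (2:ℝ≥0∞) ^ (N:ℝ) ≠ ∞ :=
    ENNReal.rpow_ne_top_of_nonneg hNpos.le ENNReal.ofNat_ne_top
  have hC2 : C = (2:ℝ≥0∞) ^ (N+1:ℝ) * c⁻¹ := by
    rw [hCdef, div_eq_mul_inv]
    congr 1
    rw [← ENNReal.ofReal_rpow_of_pos two_pos, ENNReal.ofReal_ofNat]
  have hpow : (2:ℝ≥0∞) ^ (N+1:ℝ) = (2:ℝ≥0∞) ^ (N:ℝ) * 2 := by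
    rw [ENNReal.rpow_add _ _ two_ne_zero ENNReal.ofNat_ne_top, ENNReal.rpow_one]
  have hfinal : C' ≤ C := by
    have h2 : C' ≤ ((2:ℝ≥0∞)⁻¹ ^ (N:ℝ) * m Bp)⁻¹ := by
      calc C' = (C'⁻¹)⁻¹ := (inv_inv C').symm
        _ ≤ ((2:ℝ≥0∞)⁻¹ ^ (N:ℝ) * m Bp)⁻¹ := ENNReal.inv_le_inv.mpr hraise2
    have e1 : (2:ℝ≥0∞)⁻¹ ^ (N:ℝ) = ((2:ℝ≥0∞) ^ (N:ℝ))⁻¹ := ENNReal.inv_rpow _ _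
    calc C' ≤ ((2:ℝ≥0∞)⁻¹ ^ (N:ℝ) * m Bp)⁻¹ := h2
      _ = (2:ℝ≥0∞) ^ (N:ℝ) * (m Bp)⁻¹ := by
          rw [e1, ENNReal.mul_inv (Or.inl (ENNReal.inv_ne_zero.mpr h2NT))
            (Or.inl (ENNReal.inv_ne_top.mpr h2N0)), inv_inv]
      _ = (2:ℝ≥0∞) ^ (N:ℝ) * (2 * c⁻¹) := by
          rw [hmBp, div_eq_mul_inv, ENNReal.mul_inv (Or.inl hc0) (Or.inl hcT), inv_inv, mul_comm c⁻¹ 2]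
      _ = ((2:ℝ≥0∞) ^ (N:ℝ) * 2) * c⁻¹ := by ring
      _ = (2:ℝ≥0∞) ^ (N+1:ℝ) * c⁻¹ := by rw [hpow]
      _ = C := hC2.symm
  exact absurd hfinal (not_le.mpr hCC')
end

section
/- Let N ∈ [1,∞) and let (X,d,m) be a geodesic metric measure space in which the Rényi entropy functional E_N is strongly displacement convex. Let E ⊂ X be a Borel set with 0 < m(E) < ∞, let x ∈ X be such that W₂(m(E)^{-1} m|_E, δ_x) < ∞, and let π ∈ GeoOpt(m(E)^{-1} m|_E, δ_x). For s ∈ [0,1) let ρ_s denote the density of the absolutely continuous part of (e_s)_#π with respect to m. Then ∫_X ρ_s^{1−1/N} dm ≥ (1−s)·m(E)^{1/N}, and consequently m({ρ_s > 0}) ≥ (1−s)^N m(E). -/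
open MeasureTheory Metric Set Filter ProbabilityTheory
open scoped ENNReal NNReal Topology ProbabilityTheory

section AuxLemmas

open MeasureTheory

variable {Y : Type*} [MeasurableSpace Y]

/-- The Radon–Nikodym derivative of the normalized restriction. -/
lemma rnDeriv_normalized_restrict (m : Measure Y) (E : Set Y) (hEmeas : MeasurableSet E)
    (hE0 : 0 < m E) (hEfin : m E ≠ ∞) :
    ((m E)⁻¹ • m.restrict E).rnDeriv m =ᵐ[m] E.indicator (fun _ => (m E)⁻¹) := by
  set f : Y → ℝ≥0∞ := E.indicator (fun _ => (m E)⁻¹) with hf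
  have hfmeas : Measurable f := measurable_const.indicator hEmeas
  have hwd : m.withDensity f = (m E)⁻¹ • m.restrict E := by
    rw [hf, withDensity_indicator hEmeas, withDensity_const]
  have hadd : (m E)⁻¹ • m.restrict E = 0 + m.withDensity f := by rw [zero_add, hwd]
  have h1 := Measure.eq_withDensity_rnDeriv hfmeas Measure.MutuallySingular.zero_left hadd
  have hint : ∫⁻ y, f y ∂m ≠ ∞ := by
    rw [hf, lintegral_indicator hEmeas]
    simp only [setLIntegral_const]
    exact ENNReal.mul_ne_top (ENNReal.inv_ne_top.2 hE0.ne') hEfin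
  exact ((withDensity_eq_iff hfmeas.aemeasurable
    (Measure.measurable_rnDeriv _ _).aemeasurable hint).mp h1).symm

end AuxLemmas

/-- Entropy and support estimates along a geodesic from a normalized set to a Dirac mass,
under strong displacement convexity of `E_N`. -/
theorem renyi_sdc_entropy_lower_bound_to_dirac
    {X : Type*} [MetricSpace X] [CompleteSpace X] [MeasurableSpace X] [BorelSpace X]
    (m : Measure X) (hgeo : IsGeodesicSpace X)
    (hsupp : ∀ x : X, ∀ ε > 0, 0 < m (Metric.ball x ε))
    {N : ℝ} (hN : 1 ≤ N) (hsdc : StronglyDisplacementConvex (renyiEntropy N m))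
    (E : Set X) (hEmeas : MeasurableSet E) (hE0 : 0 < m E) (hEfin : m E ≠ ∞)
    (x : X) (hW : W2 ((m E)⁻¹ • m.restrict E) (Measure.dirac x) ≠ ∞)
    (π : Measure (ℝ → X))
    (hπ : IsGeoOpt ((m E)⁻¹ • m.restrict E) (Measure.dirac x) π)
    (s : ℝ) (hs : s ∈ Set.Ico (0:ℝ) 1) :
    ENNReal.ofReal (1 - s) * m E ^ (1/N : ℝ) ≤
        ∫⁻ y, renyiIntegrand N ((π.map (evalGeo s)).rnDeriv m y) ∂m ∧
      ENNReal.ofReal ((1 - s) ^ N) * m E ≤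
        m {y : X | 0 < (π.map (evalGeo s)).rnDeriv m y} := by
  obtain ⟨hs0, hs1⟩ := hs
  have hs1' : (0:ℝ) ≤ 1 - s := by linarith
  have hN0 : (0:ℝ) < N := lt_of_lt_of_le one_pos hN
  set μ₀ : Measure X := (m E)⁻¹ • m.restrict E with hμ₀
  obtain ⟨hπprob, hπgeo, hπ0, hπ1, hπW⟩ := hπ
  -- Entropy of the initial measure
  have hrn := rnDeriv_normalized_restrict m E hEmeas hE0 hEfin
  have hent0 : (∫⁻ y, renyiIntegrand N (μ₀.rnDeriv m y) ∂m) = m E ^ (1/N : ℝ) := by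
    have hcong : (∫⁻ y, renyiIntegrand N (μ₀.rnDeriv m y) ∂m)
        = ∫⁻ y, renyiIntegrand N (E.indicator (fun _ => (m E)⁻¹) y) ∂m :=
      lintegral_congr_ae (hrn.fun_comp (renyiIntegrand N))
    have heq : ∀ y, renyiIntegrand N (E.indicator (fun _ => (m E)⁻¹) y)
        = E.indicator (fun _ => (m E)⁻¹ ^ (1 - 1/N : ℝ)) y := by
      intro y
      by_cases hy : y ∈ E
      · simp [renyiIntegrand, Set.indicator_of_mem hy, ENNReal.inv_ne_zero.2 hEfin]
      · simp [renyiIntegrand, Set.indicator_of_notMem hy]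
    rw [hcong]
    simp_rw [heq]
    rw [lintegral_indicator hEmeas, setLIntegral_const]
    have h1 : (m E)⁻¹ ^ (1 - 1/N : ℝ) = m E ^ (-(1 - 1/N) : ℝ) := by
      rw [ENNReal.inv_rpow, ENNReal.rpow_neg]
    rw [h1]
    nth_rewrite 2 [← ENNReal.rpow_one (m E)]
    rw [← ENNReal.rpow_add _ _ hE0.ne' hEfin, show (-(1 - 1/N) + 1 : ℝ) = 1/N by ring]
  -- Displacement convexity
  have hconv := hsdc (fun t => π.map (evalGeo t)) hπW s ⟨hs0, hs1.le⟩
  rw [hπ0, hπ1] at hconv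
  set A : ℝ≥0∞ := ∫⁻ y, renyiIntegrand N ((π.map (evalGeo s)).rnDeriv m y) ∂m with hA
  set K : ℝ≥0∞ := ENNReal.ofReal (1 - s) * m E ^ (1/N : ℝ) with hK
  have h2 : ((s : ℝ) : EReal) * renyiEntropy N m (Measure.dirac x) ≤ 0 := by
    refine mul_nonpos_of_nonneg_of_nonpos (EReal.coe_nonneg.2 hs0) ?_
    unfold renyiEntropy
    simpa using EReal.neg_le_neg_iff.2 (EReal.coe_ennreal_nonneg _)
  have h3 : (((1 - s : ℝ)) : EReal) * renyiEntropy N m μ₀ = -((K : ℝ≥0∞) : EReal) := by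
    unfold renyiEntropy
    rw [hent0, hK, mul_neg, EReal.coe_ennreal_mul, EReal.coe_ennreal_ofReal,
      max_eq_left hs1']
  have h4 : renyiEntropy N m (π.map (evalGeo s)) = -(A : EReal) := rfl
  rw [h4, h3] at hconv
  have h6 : -(A : EReal) ≤ -(K : EReal) := by
    refine hconv.trans ?_
    calc -(K : EReal) + ((s : ℝ) : EReal) * renyiEntropy N m (Measure.dirac x)
        ≤ -(K : EReal) + 0 := add_le_add_right h2 _
      _ = -(K : EReal) := add_zero _
  have key : K ≤ A := EReal.coe_ennreal_le_coe_ennreal_iff.mp (EReal.neg_le_neg_iff.mp h6)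
  refine ⟨key, ?_⟩
  -- Second estimate
  set ρ : X → ℝ≥0∞ := (π.map (evalGeo s)).rnDeriv m with hρ
  have hmeasρ : Measurable ρ := Measure.measurable_rnDeriv _ _
  set S : Set X := {y : X | 0 < ρ y} with hSdef
  have hS : MeasurableSet S := measurableSet_lt measurable_const hmeasρ
  have hprob : IsProbabilityMeasure (π.map (evalGeo s)) := hπW.1 s ⟨hs0, hs1.le⟩
  have hρ1 : ∫⁻ y, ρ y ∂m ≤ 1 := by
    have h := Measure.lintegral_rnDeriv_le (μ := π.map (evalGeo s)) (ν := m)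
    simpa [measure_univ] using h
  by_cases hN1 : N = 1
  · subst hN1
    have hAeq : A = m S := by
      rw [hA]
      have heq : ∀ y, renyiIntegrand 1 (ρ y) = S.indicator 1 y := by
        intro y
        by_cases hy : ρ y = 0
        · have hyS : y ∉ S := by simp [hSdef, hy]
          simp [renyiIntegrand, hy, Set.indicator_of_notMem hyS]
        · have hyS : y ∈ S := by simp [hSdef, pos_iff_ne_zero, hy]
          simp [renyiIntegrand, hy, Set.indicator_of_mem hyS]
      calc (∫⁻ y, renyiIntegrand 1 (ρ y) ∂m) = ∫⁻ y, S.indicator 1 y ∂m :=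
            lintegral_congr heq
        _ = m S := lintegral_indicator_one hS
    rw [hAeq, hK] at key
    simpa using key
  · have hN1' : 1 < N := lt_of_le_of_ne hN (Ne.symm hN1)
    have hNm1 : (0:ℝ) < N - 1 := by linarith
    have hpq : Real.HolderConjugate (N / (N - 1)) N := by
      rw [Real.holderConjugate_iff]
      constructor
      · rw [lt_div_iff₀ hNm1]; linarith
      · field_simp; ring
    set F : X → ℝ≥0∞ := fun y => ρ y ^ (1 - 1/N : ℝ) with hF
    set G : X → ℝ≥0∞ := S.indicator (1 : X → ℝ≥0∞) with hG
    have hf : AEMeasurable F m :=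
      (ENNReal.continuous_rpow_const.measurable.comp hmeasρ).aemeasurable
    have hg : AEMeasurable G m :=
      (measurable_one.indicator hS).aemeasurable
    have hAeq : A = ∫⁻ y, (F * G) y ∂m := by
      rw [hA]
      refine lintegral_congr fun y => ?_
      by_cases hy : ρ y = 0
      · have hyS : y ∉ S := by simp [hSdef, hy]
        simp [renyiIntegrand, hF, hG, hy, Set.indicator_of_notMem hyS]
      · have hyS : y ∈ S := by simp [hSdef, pos_iff_ne_zero, hy]
        simp [renyiIntegrand, hF, hG, hy, Set.indicator_of_mem hyS]
    have hHolder := ENNReal.lintegral_mul_le_Lp_mul_Lq m hpq hf hg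
    have hfp : (∫⁻ y, F y ^ (N / (N - 1)) ∂m)
        = ∫⁻ y, ρ y ∂m := by
      refine lintegral_congr fun y => ?_
      rw [hF]
      rw [← ENNReal.rpow_mul]
      rw [show (1 - 1/N) * (N / (N - 1)) = 1 by field_simp]
      exact ENNReal.rpow_one _
    have hgq : (∫⁻ y, G y ^ (N : ℝ) ∂m) = m S := by
      have : ∀ y, G y ^ (N : ℝ) = S.indicator 1 y := by
        intro y
        by_cases hy : y ∈ S
        · simp [hG, Set.indicator_of_mem hy]
        · simp [hG, Set.indicator_of_notMem hy, ENNReal.zero_rpow_of_pos hN0]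
      rw [lintegral_congr this, lintegral_indicator_one hS]
    rw [hfp, hgq] at hHolder
    have hA2 : A ≤ m S ^ (1/N : ℝ) := by
      rw [hAeq]
      refine hHolder.trans ?_
      have h1 : (∫⁻ y, ρ y ∂m) ^ (1 / (N / (N - 1))) ≤ 1 := by
        calc (∫⁻ y, ρ y ∂m) ^ (1 / (N / (N - 1)))
            ≤ (1 : ℝ≥0∞) ^ (1 / (N / (N - 1))) :=
              ENNReal.rpow_le_rpow hρ1 (by positivity)
          _ = 1 := ENNReal.one_rpow _
      calc (∫⁻ y, ρ y ∂m) ^ (1 / (N / (N - 1))) * m S ^ (1/N : ℝ)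
          ≤ 1 * m S ^ (1/N : ℝ) := mul_le_mul_left h1 _
        _ = m S ^ (1/N : ℝ) := one_mul _
    have hfinal := ENNReal.rpow_le_rpow (key.trans hA2) hN0.le
    rw [← ENNReal.rpow_mul, one_div, inv_mul_cancel₀ hN0.ne', ENNReal.rpow_one] at hfinal
    rw [hK, ENNReal.mul_rpow_of_nonneg _ _ hN0.le, ← ENNReal.rpow_mul, one_div,
      inv_mul_cancel₀ hN0.ne', ENNReal.rpow_one,
      ENNReal.ofReal_rpow_of_nonneg hs1' hN0.le] at hfinal
    exact hfinal
end

section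
/- Let (X, 𝒜, m) be a measure space with m nonatomic, let B ∈ 𝒜 with 0 < m(B) < ∞, and let u : X → ℝ be measurable. Set M = inf{a ∈ ℝ : m(B ∩ {u > a}) ≤ m(B)/2}. Then there exist disjoint measurable sets B⁺, B⁻ with B⁺ ∪ B⁻ = B, m(B⁺) = m(B⁻) = m(B)/2, and u(x) ≤ M ≤ u(y) for all x ∈ B⁻ and all y ∈ B⁺. -/
open MeasureTheory Metric Set Filter ProbabilityTheory
open scoped ENNReal NNReal Topology ProbabilityTheory

section MedianAux

variable {Y : Type*} [MeasurableSpace Y] {m : Measure Y}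

lemma medianAux_small
    (hna : ∀ A : Set Y, MeasurableSet A → 0 < m A →
      ∃ A' : Set Y, MeasurableSet A' ∧ A' ⊆ A ∧ 0 < m A' ∧ m A' < m A)
    {R : Set Y} (hR : MeasurableSet R) (hfin : m R ≠ ∞) (hpos : 0 < m R)
    {ε : ℝ≥0∞} (hε : ε ≠ 0) :
    ∃ T, MeasurableSet T ∧ T ⊆ R ∧ 0 < m T ∧ m T ≤ ε := by
  have half : ∀ n : ℕ, ∃ T, MeasurableSet T ∧ T ⊆ R ∧ 0 < m T ∧ m T ≤ m R / 2 ^ n := by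
    intro n
    induction n with
    | zero => exact ⟨R, hR, subset_rfl, hpos, by simp⟩
    | succ n ih =>
      obtain ⟨T, hTm, hTR, hT0, hTle⟩ := ih
      have h2n : ((2 : ℝ≥0∞) ^ n) ≠ 0 := by positivity
      have hTfin : m T ≠ ∞ :=
        ne_top_of_le_ne_top ((ENNReal.div_lt_top hfin h2n).ne) hTle
      obtain ⟨T', hT'm, hT'T, hT'0, hT'lt⟩ := hna T hTm hT0
      have hT'fin : m T' ≠ ∞ := ne_top_of_le_ne_top hTfin (measure_mono hT'T)
      have key : m R / 2 ^ (n + 1) = m R / 2 ^ n / 2 := by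
        rw [pow_succ, ENNReal.div_eq_inv_mul, ENNReal.div_eq_inv_mul, ENNReal.div_eq_inv_mul,
          ENNReal.mul_inv (Or.inl h2n) (Or.inl (by simp))]; ring
      by_cases hc : m T' ≤ m T / 2
      · exact ⟨T', hT'm, hT'T.trans hTR, hT'0, by
          rw [key]; exact hc.trans (ENNReal.div_le_div_right hTle 2)⟩
      · push_neg at hc
        have hdiff : m (T \ T') = m T - m T' :=
          measure_diff hT'T hT'm.nullMeasurableSet hT'fin
        refine ⟨T \ T', hTm.diff hT'm, diff_subset.trans hTR, ?_, ?_⟩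
        · rw [hdiff]; exact tsub_pos_of_lt hT'lt
        · rw [key, hdiff]
          calc m T - m T' ≤ m T - m T / 2 := tsub_le_tsub_left hc.le _
            _ = m T / 2 := ENNReal.sub_half hTfin
            _ ≤ m R / 2 ^ n / 2 := ENNReal.div_le_div_right hTle 2
  rcases eq_or_ne ε ∞ with hεt | hεt
  · obtain ⟨T, h1, h2, h3, _⟩ := half 0
    exact ⟨T, h1, h2, h3, by simp [hεt]⟩
  obtain ⟨k, hk⟩ := ENNReal.exists_nat_gt ((ENNReal.div_lt_top hfin hε).ne)
  obtain ⟨T, h1, h2, h3, h4⟩ := half k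
  refine ⟨T, h1, h2, h3, h4.trans ?_⟩
  have hk2 : m R / ε < 2 ^ k := by
    refine hk.trans_le ?_
    exact_mod_cast (Nat.lt_two_pow_self (n := k)).le
  have hlt : m R < 2 ^ k * ε := (ENNReal.div_lt_iff (Or.inl hε) (Or.inl hεt)).mp hk2
  exact (ENNReal.div_le_iff_le_mul (Or.inl (by positivity)) (Or.inl (by simp))).mpr
    (by rw [mul_comm] at hlt; exact hlt.le)

lemma medianAux_sierpinski
    (hna : ∀ A : Set Y, MeasurableSet A → 0 < m A →
      ∃ A' : Set Y, MeasurableSet A' ∧ A' ⊆ A ∧ 0 < m A' ∧ m A' < m A)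
    {A : Set Y} (hA : MeasurableSet A) (hfin : m A ≠ ∞) {c : ℝ≥0∞} (hc : c ≤ m A) :
    ∃ F, MeasurableSet F ∧ F ⊆ A ∧ m F = c := by
  classical
  have hctop : c ≠ ∞ := ne_top_of_le_ne_top hfin hc
  have step : ∀ S : Set Y, MeasurableSet S → S ⊆ A → m S ≤ c →
      ∃ T, MeasurableSet T ∧ T ⊆ A \ S ∧ m S + m T ≤ c ∧
        ∀ T', MeasurableSet T' → T' ⊆ A \ S → m S + m T' ≤ c → m T' ≤ 2 * m T := by
    intro S hSm hSA hSc
    set D : Set ℝ≥0∞ :=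
      {r | ∃ T', MeasurableSet T' ∧ T' ⊆ A \ S ∧ m S + m T' ≤ c ∧ m T' = r} with hD
    have h0D : (0 : ℝ≥0∞) ∈ D :=
      ⟨∅, MeasurableSet.empty, empty_subset _, by simpa using hSc, measure_empty⟩
    have hDle : ∀ r ∈ D, r ≤ c := by
      rintro r ⟨T', _, _, hle, rfl⟩
      exact le_trans le_add_self hle
    set d := sSup D with hd
    have hdc : d ≤ c := sSup_le hDle
    have hdtop : d ≠ ∞ := ne_top_of_le_ne_top hctop hdc
    rcases eq_or_ne d 0 with hd0 | hd0
    · refine ⟨∅, MeasurableSet.empty, empty_subset _, by simpa using hSc, ?_⟩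
      intro T' hT'm hT'sub hT'le
      have : m T' ≤ d := le_sSup ⟨T', hT'm, hT'sub, hT'le, rfl⟩
      simp [hd0] at this
      simp [this]
    · have hhalf : d / 2 < d := ENNReal.half_lt_self hd0 hdtop
      obtain ⟨r, hrD, hr⟩ := lt_sSup_iff.mp hhalf
      obtain ⟨T, hTm, hTsub, hTle, hTr⟩ := hrD
      refine ⟨T, hTm, hTsub, hTle, ?_⟩
      intro T' hT'm hT'sub hT'le
      have h1 : m T' ≤ d := le_sSup ⟨T', hT'm, hT'sub, hT'le, rfl⟩
      have h2 : d < 2 * m T := by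
        rw [← hTr] at hr
        rw [mul_comm]
        exact (ENNReal.div_lt_iff (Or.inl two_ne_zero) (Or.inl ENNReal.ofNat_ne_top)).mp hr
      exact h1.trans h2.le
  set Next : Set Y → Set Y := fun S =>
    if h : MeasurableSet S ∧ S ⊆ A ∧ m S ≤ c then
      S ∪ (step S h.1 h.2.1 h.2.2).choose
    else S with hNext
  set g : ℕ → Set Y := fun n => Next^[n] ∅ with hg
  have hg0 : g 0 = ∅ := rfl
  have hgsucc : ∀ n, g (n + 1) = Next (g n) := fun n => Function.iterate_succ_apply' _ _ _
  have hsub : ∀ S, S ⊆ Next S := by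
    intro S
    simp only [hNext]
    split
    · exact subset_union_left
    · exact subset_rfl
  have hmono : Monotone g := monotone_nat_of_le_succ fun n => (hgsucc n) ▸ hsub (g n)
  have hinv : ∀ n, MeasurableSet (g n) ∧ g n ⊆ A ∧ m (g n) ≤ c := by
    intro n
    induction n with
    | zero => exact ⟨MeasurableSet.empty, empty_subset _, by rw [hg0]; simp⟩
    | succ n ih =>
      obtain ⟨h1, h2, h3⟩ := ih
      have hN : Next (g n) = g n ∪ (step (g n) h1 h2 h3).choose := by
        simp only [hNext]; rw [dif_pos ⟨h1, h2, h3⟩]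
      obtain ⟨hTm, hTsub, hTle, _⟩ := (step (g n) h1 h2 h3).choose_spec
      rw [hgsucc n, hN]
      exact ⟨h1.union hTm, union_subset h2 (hTsub.trans diff_subset),
        le_trans (measure_union_le _ _) hTle⟩
  set F := ⋃ n, g n with hF
  have hFm : MeasurableSet F := MeasurableSet.iUnion fun n => (hinv n).1
  have hFA : F ⊆ A := iUnion_subset fun n => (hinv n).2.1
  have hFle : m F ≤ c := by
    rw [hF, hmono.measure_iUnion]
    exact iSup_le fun n => (hinv n).2.2
  refine ⟨F, hFm, hFA, le_antisymm hFle (not_lt.mp fun hlt => ?_)⟩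
  -- derive contradiction from m F < c
  have hFfin : m F ≠ ∞ := ne_top_of_le_ne_top hctop hFle
  have hAF : 0 < m (A \ F) := by
    by_contra h
    push_neg at h
    have h0 : m (A \ F) = 0 := le_antisymm h zero_le
    have : m A ≤ m F := by
      calc m A = m (F ∪ (A \ F)) := by rw [union_diff_cancel hFA]
        _ ≤ m F + m (A \ F) := measure_union_le _ _
        _ = m F := by rw [h0, add_zero]
    exact absurd (hc.trans this) (not_le.mpr hlt)
  have hAFfin : m (A \ F) ≠ ∞ := ne_top_of_le_ne_top hfin (measure_mono diff_subset)
  have hεne : c - m F ≠ 0 := by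
    intro h
    exact absurd (tsub_eq_zero_iff_le.mp h) (not_le.mpr hlt)
  obtain ⟨T₀, hT₀m, hT₀sub, hT₀0, hT₀le⟩ :=
    medianAux_small hna (hA.diff hFm) hAFfin hAF hεne
  have hq0 : m T₀ / 2 ≠ 0 := by
    simp only [ne_eq, ENNReal.div_eq_zero_iff]
    push_neg
    exact ⟨hT₀0.ne', ENNReal.ofNat_ne_top⟩
  have hqtop : m T₀ / 2 ≠ ∞ := by
    refine (ENNReal.div_lt_top ?_ two_ne_zero).ne
    exact ne_top_of_le_ne_top (ENNReal.sub_ne_top hctop) hT₀le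
  -- for every n, m T₀ / 2 ≤ m of the added piece
  have hgrow : ∀ n : ℕ, (n : ℝ≥0∞) * (m T₀ / 2) ≤ m (g n) := by
    intro n
    induction n with
    | zero => simp
    | succ n ih =>
      obtain ⟨h1, h2, h3⟩ := hinv n
      have hN : g (n + 1) = g n ∪ (step (g n) h1 h2 h3).choose := by
        rw [hgsucc n]; simp only [hNext]; rw [dif_pos ⟨h1, h2, h3⟩]
      obtain ⟨hTm, hTsub, hTle, hTmax⟩ := (step (g n) h1 h2 h3).choose_spec
      have hT₀sub' : T₀ ⊆ A \ g n :=
        hT₀sub.trans (diff_subset_diff_right (subset_iUnion g n))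
      have hsum : m (g n) + m T₀ ≤ c := by
        calc m (g n) + m T₀ ≤ m F + (c - m F) :=
              add_le_add (measure_mono (subset_iUnion g n)) hT₀le
          _ = c := add_tsub_cancel_of_le hlt.le
      have hhalfle : m T₀ / 2 ≤ m (step (g n) h1 h2 h3).choose := by
        rw [ENNReal.div_le_iff_le_mul (Or.inl two_ne_zero) (Or.inl ENNReal.ofNat_ne_top)]
        rw [mul_comm]
        exact hTmax T₀ hT₀m hT₀sub' hsum
      have hdisj : Disjoint (g n) (step (g n) h1 h2 h3).choose :=
        disjoint_sdiff_right.mono_right hTsub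
      have hmeq : m (g (n + 1)) = m (g n) + m (step (g n) h1 h2 h3).choose := by
        rw [hN, measure_union hdisj hTm]
      calc ((n + 1 : ℕ) : ℝ≥0∞) * (m T₀ / 2) = (n : ℝ≥0∞) * (m T₀ / 2) + m T₀ / 2 := by
            push_cast; ring
        _ ≤ m (g n) + m (step (g n) h1 h2 h3).choose := add_le_add ih hhalfle
        _ = m (g (n + 1)) := hmeq.symm
  obtain ⟨n, hn⟩ := ENNReal.exists_nat_gt ((ENNReal.div_lt_top hctop hq0).ne)
  have : c < (n : ℝ≥0∞) * (m T₀ / 2) :=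
    (ENNReal.div_lt_iff (Or.inl hq0) (Or.inl hqtop)).mp hn
  exact absurd ((this.trans_le (hgrow n)).trans_le (hinv n).2.2) (lt_irrefl c)

end MedianAux

/-- Splitting a set of finite positive measure into two halves by the median of `u`. -/
theorem median_splitting
    {Y : Type*} [MeasurableSpace Y] (m : Measure Y)
    (hna : ∀ A : Set Y, MeasurableSet A → 0 < m A →
      ∃ A' : Set Y, MeasurableSet A' ∧ A' ⊆ A ∧ 0 < m A' ∧ m A' < m A)
    (B : Set Y) (hB : MeasurableSet B) (hB0 : 0 < m B) (hBfin : m B < ∞)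
    (u : Y → ℝ) (hu : Measurable u) :
    ∃ Bp Bm : Set Y, MeasurableSet Bp ∧ MeasurableSet Bm ∧ Disjoint Bp Bm ∧
      Bp ∪ Bm = B ∧ m Bp = m B / 2 ∧ m Bm = m B / 2 ∧
      ∀ x ∈ Bm, ∀ y ∈ Bp,
        u x ≤ sInf {a : ℝ | m (B ∩ {z | a < u z}) ≤ m B / 2} ∧
        sInf {a : ℝ | m (B ∩ {z | a < u z}) ≤ m B / 2} ≤ u y := by
  classical
  set h : ℝ≥0∞ := m B / 2 with hh
  have hBne : m B ≠ 0 := hB0.ne'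
  have hBtop : m B ≠ ∞ := hBfin.ne
  have hpos : 0 < h := ENNReal.div_pos hBne ENNReal.ofNat_ne_top
  have hlthalf : h < m B := ENNReal.half_lt_self hBne hBtop
  set f : ℝ → ℝ≥0∞ := fun a => m (B ∩ {z | a < u z}) with hf
  have msA : ∀ a : ℝ, MeasurableSet (B ∩ {z | a < u z}) := fun a =>
    hB.inter (measurableSet_lt measurable_const hu)
  have fanti : ∀ a b : ℝ, a ≤ b → f b ≤ f a := fun a b hab =>
    measure_mono (inter_subset_inter_right _ fun z hz => lt_of_le_of_lt hab hz)
  have ffin : ∀ a, f a ≠ ∞ := fun a =>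
    ne_top_of_le_ne_top hBtop (measure_mono inter_subset_left)
  set Sset : Set ℝ := {a : ℝ | m (B ∩ {z | a < u z}) ≤ m B / 2} with hSset
  -- Sset is nonempty
  have hSne : Sset.Nonempty := by
    by_contra hcon
    rw [Set.not_nonempty_iff_eq_empty] at hcon
    have hall : ∀ n : ℕ, h < f n := by
      intro n
      by_contra hn
      push_neg at hn
      have hmem : (n : ℝ) ∈ Sset := hn
      rw [hcon] at hmem
      exact hmem
    have hanti : Antitone fun n : ℕ => B ∩ {z | (n : ℝ) < u z} := by
      intro i j hij
      refine inter_subset_inter_right _ fun z hz => ?_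
      simp only [mem_setOf_eq] at hz ⊢
      exact lt_of_le_of_lt (by exact_mod_cast hij) hz
    have hiempty : (⋂ n : ℕ, B ∩ {z | (n : ℝ) < u z}) = ∅ := by
      ext z
      simp only [mem_iInter, mem_inter_iff, mem_setOf_eq, mem_empty_iff_false, iff_false]
      intro hcontra
      obtain ⟨n, hn⟩ := exists_nat_gt (u z)
      exact absurd ((hcontra n).2) (not_lt.mpr hn.le)
    have := hanti.measure_iInter (μ := m) (fun n => (msA n).nullMeasurableSet)
      ⟨0, ne_top_of_le_ne_top hBtop (measure_mono inter_subset_left)⟩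
    rw [hiempty, measure_empty] at this
    have : h ≤ 0 := this ▸ le_iInf fun n => (hall n).le
    exact absurd (this.trans_lt hpos) (lt_irrefl _)
  -- Sset is bounded below
  have hSbdd : BddBelow Sset := by
    have hmono : Monotone fun n : ℕ => B ∩ {z | (-(n : ℝ)) < u z} := by
      intro i j hij
      refine inter_subset_inter_right _ fun z hz => ?_
      simp only [mem_setOf_eq] at hz ⊢
      refine lt_of_le_of_lt ?_ hz
      simp only [neg_le_neg_iff]
      exact_mod_cast hij
    have hiB : (⋃ n : ℕ, B ∩ {z | (-(n : ℝ)) < u z}) = B := by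
      ext z
      simp only [mem_iUnion, mem_inter_iff, mem_setOf_eq]
      constructor
      · rintro ⟨n, hn, _⟩; exact hn
      · intro hz
        obtain ⟨n, hn⟩ := exists_nat_gt (-(u z))
        exact ⟨n, hz, by linarith⟩
    have hsup := hmono.measure_iUnion (μ := m)
    rw [hiB] at hsup
    have : ∃ n : ℕ, h < f (-(n : ℝ)) := by
      by_contra hcon
      push_neg at hcon
      have : m B ≤ h := hsup ▸ iSup_le fun n => hcon n
      exact absurd (this.trans_lt hlthalf) (lt_irrefl _)
    obtain ⟨n, hn⟩ := this
    refine ⟨-(n : ℝ), fun a ha => ?_⟩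
    by_contra hcontra
    push_neg at hcontra
    exact absurd ((fanti _ _ hcontra.le).trans ha) (not_le.mpr hn)
  set M : ℝ := sInf Sset with hM
  have hSup : ∀ a : ℝ, M < a → f a ≤ h := by
    intro a ha
    obtain ⟨s, hs, hsa⟩ := exists_lt_of_csInf_lt hSne ha
    exact (fanti s a hsa.le).trans hs
  have hSlow : ∀ a : ℝ, a < M → h < f a := by
    intro a ha
    by_contra hcon
    push_neg at hcon
    exact absurd (csInf_le hSbdd (hcon : a ∈ Sset)) (not_le.mpr ha)
  set P : Set Y := B ∩ {z | M < u z} with hP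
  set E : Set Y := B ∩ {z | u z = M} with hE
  have hPm : MeasurableSet P := msA M
  have hEm : MeasurableSet E := hB.inter (hu (measurableSet_singleton M))
  -- m P ≤ h
  have hPle : m P ≤ h := by
    have hPun : P = ⋃ n : ℕ, B ∩ {z | M + 1 / (n + 1) < u z} := by
      ext z
      simp only [hP, mem_iUnion, mem_inter_iff, mem_setOf_eq]
      constructor
      · rintro ⟨hz, hz2⟩
        obtain ⟨n, hn⟩ := exists_nat_one_div_lt (sub_pos.mpr hz2)
        exact ⟨n, hz, by linarith⟩
      · rintro ⟨n, hz, hz2⟩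
        have : (0:ℝ) < 1 / (n + 1) := by positivity
        exact ⟨hz, by linarith⟩
    have hmono : Monotone fun n : ℕ => B ∩ {z | M + 1 / ((n : ℝ) + 1) < u z} := by
      intro i j hij
      refine inter_subset_inter_right _ fun z hz => ?_
      simp only [mem_setOf_eq] at hz ⊢
      refine lt_of_le_of_lt ?_ hz
      have : (1 : ℝ) / ((j : ℝ) + 1) ≤ 1 / ((i : ℝ) + 1) := by
        apply one_div_le_one_div_of_le (by positivity)
        have : (i : ℝ) ≤ j := by exact_mod_cast hij
        linarith
      linarith
    rw [hPun, hmono.measure_iUnion]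
    refine iSup_le fun n => hSup _ ?_
    have : (0:ℝ) < 1 / ((n:ℝ) + 1) := by positivity
    linarith
  -- h ≤ m (P ∪ E)
  have hQge : h ≤ m (B ∩ {z | M ≤ u z}) := by
    have hQint : B ∩ {z | M ≤ u z} = ⋂ n : ℕ, B ∩ {z | M - 1 / (n + 1) < u z} := by
      ext z
      simp only [mem_iInter, mem_inter_iff, mem_setOf_eq]
      constructor
      · rintro ⟨hz, hz2⟩ n
        have : (0:ℝ) < 1 / ((n:ℝ) + 1) := by positivity
        exact ⟨hz, by linarith⟩
      · intro hcontra
        refine ⟨(hcontra 0).1, ?_⟩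
        by_contra hlt
        push_neg at hlt
        obtain ⟨n, hn⟩ := exists_nat_one_div_lt (sub_pos.mpr hlt)
        have := (hcontra n).2
        push_cast at hn this
        linarith
    have hanti : Antitone fun n : ℕ => B ∩ {z | M - 1 / ((n : ℝ) + 1) < u z} := by
      intro i j hij
      refine inter_subset_inter_right _ fun z hz => ?_
      simp only [mem_setOf_eq] at hz ⊢
      refine lt_of_le_of_lt ?_ hz
      have : (1 : ℝ) / ((j : ℝ) + 1) ≤ 1 / ((i : ℝ) + 1) := by
        apply one_div_le_one_div_of_le (by positivity)
        have : (i : ℝ) ≤ j := by exact_mod_cast hij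
        linarith
      linarith
    rw [hQint, hanti.measure_iInter (μ := m) (fun n => (msA _).nullMeasurableSet)
      ⟨0, ne_top_of_le_ne_top hBtop (measure_mono inter_subset_left)⟩]
    refine le_iInf fun n => (hSlow _ ?_).le
    have : (0:ℝ) < 1 / ((n:ℝ) + 1) := by positivity
    linarith
  have hPE : B ∩ {z | M ≤ u z} = P ∪ E := by
    ext z
    simp only [hP, hE, mem_inter_iff, mem_setOf_eq, mem_union]
    constructor
    · rintro ⟨hz, hz2⟩
      rcases lt_or_eq_of_le hz2 with h' | h'
      · exact Or.inl ⟨hz, h'⟩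
      · exact Or.inr ⟨hz, h'.symm⟩
    · rintro (⟨hz, hz2⟩ | ⟨hz, hz2⟩)
      · exact ⟨hz, hz2.le⟩
      · exact ⟨hz, hz2.ge⟩
  have hsum : h ≤ m P + m E := by
    calc h ≤ m (B ∩ {z | M ≤ u z}) := hQge
      _ = m (P ∪ E) := by rw [hPE]
      _ ≤ m P + m E := measure_union_le _ _
  set t : ℝ≥0∞ := h - m P with ht
  have htE : t ≤ m E := by
    rw [ht]
    exact tsub_le_iff_left.mpr hsum
  have hEfin : m E ≠ ∞ := ne_top_of_le_ne_top hBtop (measure_mono inter_subset_left)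
  obtain ⟨F, hFm, hFE, hFt⟩ := medianAux_sierpinski hna hEm hEfin htE
  set Bp : Set Y := P ∪ F with hBp
  have hBpm : MeasurableSet Bp := hPm.union hFm
  have hBpB : Bp ⊆ B := union_subset inter_subset_left (hFE.trans inter_subset_left)
  set Bm : Set Y := B \ Bp with hBm
  have hdisjPF : Disjoint P F := by
    refine Disjoint.mono_right hFE ?_
    rw [Set.disjoint_left]
    rintro z ⟨_, hz2⟩ ⟨_, hz4⟩
    rw [mem_setOf_eq] at hz2 hz4
    exact absurd hz4 (ne_of_gt hz2)
  have hmBp : m Bp = h := by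
    rw [hBp, measure_union hdisjPF hFm, hFt, ht, add_tsub_cancel_of_le hPle]
  have hmBm : m Bm = h := by
    rw [hBm, measure_diff hBpB hBpm.nullMeasurableSet
      (by rw [hmBp]; exact ne_top_of_le_ne_top hBtop hlthalf.le), hmBp, hh,
      ENNReal.sub_half hBtop]
  refine ⟨Bp, Bm, hBpm, hB.diff hBpm, disjoint_sdiff_right, union_diff_cancel hBpB,
    hmBp, hmBm, ?_⟩
  intro x hx y hy
  constructor
  · -- u x ≤ M
    obtain ⟨hxB, hxnp⟩ := hx
    by_contra hcon
    push_neg at hcon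
    exact hxnp (Or.inl ⟨hxB, hcon⟩)
  · -- M ≤ u y
    rcases hy with hy | hy
    · exact hy.2.le
    · exact (hFE hy).2.ge
end
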